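/- arXiv:math/0606102 — 4 statements merged into one kernel-verified Lean document; each statement's English description precedes it below -/
import Mathlib

section
/- For every p ≥ 1 the cochain c_p is an inhomogeneous p-cocycle of P_n with values in the trivial representation Λ^p H_ℚ (its inhomogeneous coboundary vanishes), and for every partition λ of q with positive parts the cochain c_λ is an inhomogeneous q-cocycle of P_n with values in Λ^q H_ℚ. -/
noncomputable section
open scoped TensorProduct


/-- `H = Fin n →₀ ℤ`, the first integral homology of the free group. -/
abbrev Hz (n : ℕ) : Type := Fin n →₀ ℤ

/-- The standard basis vector `X i`. -/
def Xz (n : ℕ) (i : Fin n) : Hz n := Finsupp.single i 1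

/-- `H ⊗ℤ H`. -/
abbrev HHz (n : ℕ) : Type := Hz n ⊗[ℤ] Hz n

/-- The degree ≤ 2 truncation of the Magnus algebra: underlying set `H × (H ⊗ H)`,
with multiplication `(u,s)·(u',s') = (u+u', s+s'+u⊗u')`. -/
def Mn (n : ℕ) : Type := Hz n × HHz n

namespace Mn

variable {n : ℕ}

instance : Group (Mn n) where
  mul a b := (a.1 + b.1, a.2 + b.2 + a.1 ⊗ₜ[ℤ] b.1)
  one := ((0 : Hz n), (0 : HHz n))
  inv a := (-a.1, -a.2 + a.1 ⊗ₜ[ℤ] a.1)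
  mul_assoc a b c := by
    show (_, _) = (_, _)
    refine Prod.ext (add_assoc _ _ _) ?_
    show a.2 + b.2 + a.1 ⊗ₜ[ℤ] b.1 + c.2 + (a.1 + b.1) ⊗ₜ[ℤ] c.1
        = a.2 + (b.2 + c.2 + b.1 ⊗ₜ[ℤ] c.1) + a.1 ⊗ₜ[ℤ] (b.1 + c.1)
    rw [TensorProduct.add_tmul, TensorProduct.tmul_add]
    abel
  one_mul a := by
    show ((0 : Hz n) + a.1, (0 : HHz n) + a.2 + (0 : Hz n) ⊗ₜ[ℤ] a.1) = a
    rw [TensorProduct.zero_tmul]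
    simp
    rfl
  mul_one a := by
    show (a.1 + 0, a.2 + (0:HHz n) + a.1 ⊗ₜ[ℤ] (0 : Hz n)) = a
    rw [TensorProduct.tmul_zero]
    simp
    rfl
  inv_mul_cancel a := by
    show (-a.1 + a.1, (-a.2 + a.1 ⊗ₜ[ℤ] a.1) + a.2 + (-a.1) ⊗ₜ[ℤ] a.1) = ((0:Hz n), (0:HHz n))
    rw [TensorProduct.neg_tmul]
    refine Prod.ext (by simp) ?_
    show _ = (0 : HHz n)
    abel

end Mn

/-- The truncated standard Magnus expansion `Θ : F_n →* M_n`, `x_i ↦ (X_i, 0)`. -/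
def Theta (n : ℕ) : FreeGroup (Fin n) →* Mn n :=
  FreeGroup.lift fun i => ((Xz n i, 0) : Mn n)

/-- The abelianization map `a : F_n → H`, the first component of `Θ`. -/
def aMap (n : ℕ) (γ : FreeGroup (Fin n)) : Hz n := (Theta n γ).1

/-- `θ₂`, the second component of the truncated Magnus expansion. -/
def theta2 (n : ℕ) (γ : FreeGroup (Fin n)) : HHz n := (Theta n γ).2


/-- The braid relations on `m` generators `σ_0, …, σ_{m-1}` (0-based):
`σ i` and `σ j` commute for `i + 2 ≤ j`, and `σ i σ (i+1) σ i = σ (i+1) σ i σ (i+1)`. -/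
def braidRels (m : ℕ) : Set (FreeGroup (Fin m)) :=
  {r | (∃ i j : Fin m, (i : ℕ) + 2 ≤ (j : ℕ) ∧
          r = .of i * .of j * (.of i)⁻¹ * (.of j)⁻¹) ∨
       (∃ i j : Fin m, (i : ℕ) + 1 = (j : ℕ) ∧
          r = .of i * .of j * .of i * (.of j * .of i * .of j)⁻¹)}

/-- The braid group on `m+1` strings, presented with `m` generators. `B_n = Braid (n-1)`. -/
abbrev Braid (m : ℕ) : Type := PresentedGroup (braidRels m)

/-- The generator `σ_i` (0-based) of the braid group. -/
def sigma {m : ℕ} (i : Fin m) : Braid m := PresentedGroup.of i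

/-- The generator `σ_k` of the braid group indexed by a natural number `k`
(defined to be `1` out of range). -/
def sg (m : ℕ) (k : ℕ) : Braid m :=
  if h : k < m then sigma ⟨k, h⟩ else 1

/-- The pure braid generator `A_{i,j}` (`0`-based indices `i < j`):
`Ael m i j = σ_{j-1} ⋯ σ_{i+1} σ_i² σ_{i+1}⁻¹ ⋯ σ_{j-1}⁻¹` in `Braid m`. -/
def Ael (m : ℕ) (i : ℕ) : ℕ → Braid m
  | 0 => 1
  | (j + 1) =>
    if j = i then sg m i * sg m i
    else sg m j * Ael m i j * (sg m j)⁻¹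

abbrev V (n : ℕ) : Type := Fin n → ℚ
def toV (n : ℕ) : Hz n →+ V n :=
  AddMonoidHom.mk' (fun h i => ((h i : ℤ) : ℚ))
    (fun a b => by funext i; simp [Finsupp.add_apply])
def toQ2 (n : ℕ) : (Hz n ⊗[ℤ] Hz n) →+ (V n ⊗[ℚ] V n) :=
  TensorProduct.liftAddHom
    (AddMonoidHom.mk'
      (fun a => AddMonoidHom.mk' (fun b => toV n a ⊗ₜ[ℚ] toV n b)
        (fun b b' => by
          show toV n a ⊗ₜ[ℚ] toV n (b + b') = _
          rw [map_add, TensorProduct.tmul_add]))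
      (fun a a' => by
        apply AddMonoidHom.ext
        intro b
        show (toV n (a + a')) ⊗ₜ[ℚ] (toV n b) =
          (toV n a) ⊗ₜ[ℚ] (toV n b) + (toV n a') ⊗ₜ[ℚ] (toV n b)
        rw [map_add, TensorProduct.add_tmul]))
    (fun z a b => by
      show (toV n (z • a)) ⊗ₜ[ℚ] (toV n b) = (toV n a) ⊗ₜ[ℚ] (toV n (z • b))
      rw [map_zsmul, map_zsmul, TensorProduct.smul_tmul])

/-- The `ℚ`-linear extension `H_ℚ → H_ℚ ⊗ H_ℚ` of an additive map `H → H ⊗ H`. -/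
def tauQ (n : ℕ) (t : Hz n →+ HHz n) : V n →ₗ[ℚ] (V n ⊗[ℚ] V n) :=
  (Pi.basisFun ℚ (Fin n)).constr ℚ (fun i => toQ2 n (t (Xz n i)))

def ecast (n : ℕ) {a b : ℕ} (h : a = b) : ⋀[ℚ]^a (V n) →ₗ[ℚ] ⋀[ℚ]^b (V n) :=
  Submodule.inclusion (by rw [h])
def oneE (n : ℕ) : ⋀[ℚ]^0 (V n) :=
  ⟨1, by
    show (1 : ExteriorAlgebra ℚ (V n)) ∈
      LinearMap.range (ExteriorAlgebra.ι ℚ (M := V n)) ^ 0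
    rw [pow_zero]
    exact Submodule.one_le.1 le_rfl⟩
def iota1 (n : ℕ) : V n →ₗ[ℚ] ⋀[ℚ]^1 (V n) :=
  LinearMap.codRestrict _ (ExteriorAlgebra.ι ℚ)
    (fun v => by
      show ExteriorAlgebra.ι ℚ v ∈
        LinearMap.range (ExteriorAlgebra.ι ℚ (M := V n)) ^ 1
      rw [pow_one]; exact ⟨v, rfl⟩)
def wedgeMap (n : ℕ) (a b : ℕ) :
    ⋀[ℚ]^a (V n) →ₗ[ℚ] ⋀[ℚ]^b (V n) →ₗ[ℚ] ⋀[ℚ]^(a+b) (V n) :=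
  LinearMap.mk₂ ℚ
    (fun x y => ⟨x.1 * y.1, by
      show (x.1 * y.1 : ExteriorAlgebra ℚ (V n)) ∈
        LinearMap.range (ExteriorAlgebra.ι ℚ (M := V n)) ^ (a + b)
      rw [pow_add]
      exact Submodule.mul_mem_mul x.2 y.2⟩)
    (fun x x' y => Subtype.ext (by simp [add_mul]))
    (fun c x y => Subtype.ext (by simp [smul_mul_assoc]))
    (fun x y y' => Subtype.ext (by simp [mul_add]))
    (fun c x y => Subtype.ext (by simp [mul_smul_comm]))
def Tp (n : ℕ) : ℕ → ModuleCat.{0} ℚ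
  | 0 => ModuleCat.of ℚ ℚ
  | (m+1) => ModuleCat.of ℚ (V n ⊗[ℚ] (Tp n m))
def pip (n : ℕ) : (p : ℕ) → ((Tp n p : Type) →ₗ[ℚ] ⋀[ℚ]^p (V n))
  | 0 => LinearMap.toSpanSingleton ℚ _ (oneE n)
  | (p+1) =>
    TensorProduct.lift
      ((((wedgeMap n 1 p).comp (iota1 n)).compl₂ (pip n p)).compr₂
        (ecast n (Nat.add_comm 1 p)))
def expandLeft (n m : ℕ) (u : V n →ₗ[ℚ] V n ⊗[ℚ] V n) :
    (Tp n (m+1) : Type) →ₗ[ℚ] (Tp n (m+2) : Type) :=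
  (TensorProduct.assoc ℚ (V n) (V n) (Tp n m)).toLinearMap ∘ₗ (LinearMap.rTensor (Tp n m) u)
def Bfun (n : ℕ) : (p : ℕ) → (Fin p → (V n →ₗ[ℚ] V n ⊗[ℚ] V n)) →
    (V n →ₗ[ℚ] (Tp n (p+1) : Type))
  | 0, _ => (TensorProduct.rid ℚ (V n)).symm.toLinearMap
  | (p+1), u => (expandLeft n p (u 0)) ∘ₗ Bfun n p (fun k => u k.succ)
def eQ (n : ℕ) (i : Fin n) : V n := Pi.single i 1
def rp (n : ℕ) (p : ℕ) (u : V n →ₗ[ℚ] (Tp n (p+1) : Type)) : (Tp n p : Type) :=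
  ∑ i : Fin n, (TensorProduct.lid ℚ (Tp n p))
    ((LinearMap.rTensor (Tp n p) (LinearMap.proj i : V n →ₗ[ℚ] ℚ)) (u (eQ n i)))

section Cochains

variable {G : Type} [Group G] (n : ℕ)

/-- `c_p(g₁,…,g_p) = π_p(r_p(b_p(t(g₁) ⊗ ⋯ ⊗ t(g_p))))`. -/
def cpGen (t : G → (V n →ₗ[ℚ] V n ⊗[ℚ] V n)) (p : ℕ) (g : Fin p → G) :
    ⋀[ℚ]^p (V n) :=
  pip n p (rp n p (Bfun n p (fun k => t (g k))))

/-- The cochain `c_λ`: wedge of the `c_{λ_k}` on consecutive blocks. -/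
def cList (t : G → (V n →ₗ[ℚ] V n ⊗[ℚ] V n)) :
    (l : List ℕ) → (Fin l.sum → G) → ⋀[ℚ]^(l.sum) (V n)
  | [] => fun _ => ecast n (by simp) (oneE n)
  | a :: l => fun g =>
    ecast n (by simp)
      (wedgeMap n a l.sum
        (cpGen n t a (fun i => g ⟨i.1, by
          have h2 : (a :: l).sum = a + l.sum := by simp
          omega⟩))
        (cList t l (fun i => g ⟨a + i.1, by
          have h1 := i.2
          have h2 : (a :: l).sum = a + l.sum := by simp
          omega⟩)))

/-- The action of `g` on `Hom(H_ℚ, H_ℚ ⊗ H_ℚ)`:  `g·u = (ρ g ⊗ ρ g) ∘ u ∘ ρ g⁻¹`. -/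
def actHom (ρ : G →* (V n →ₗ[ℚ] V n)) (g : G) (u : V n →ₗ[ℚ] V n ⊗[ℚ] V n) :
    V n →ₗ[ℚ] V n ⊗[ℚ] V n :=
  (TensorProduct.map (ρ g) (ρ g)) ∘ₗ u ∘ₗ (ρ g⁻¹)

/-- The twisted cochain
`z_p(g₁,…,g_p) = π_p(r_p(b_p(t(g₁) ⊗ (g₁·t(g₂)) ⊗ ⋯ ⊗ ((g₁⋯g_{p-1})·t(g_p)))))`. -/
def zpGen (t : G → (V n →ₗ[ℚ] V n ⊗[ℚ] V n)) (ρ : G →* (V n →ₗ[ℚ] V n))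
    (p : ℕ) (g : Fin p → G) : ⋀[ℚ]^p (V n) :=
  pip n p (rp n p (Bfun n p
    (fun k => actHom n ρ ((List.ofFn g).take k).prod (t (g k)))))

end Cochains

lemma extMap_mem (n : ℕ) (f : V n →ₗ[ℚ] V n) :
    ∀ (m : ℕ) (x : ExteriorAlgebra ℚ (V n)), x ∈ ⋀[ℚ]^m (V n) →
      ExteriorAlgebra.map f x ∈ ⋀[ℚ]^m (V n) := by
  intro m
  induction m with
  | zero =>
    intro x hx
    have hx0 : x ∈ LinearMap.range (ExteriorAlgebra.ι ℚ (M := V n)) ^ 0 := hx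
    rw [pow_zero] at hx0
    show ExteriorAlgebra.map f x ∈ LinearMap.range (ExteriorAlgebra.ι ℚ (M := V n)) ^ 0
    rw [pow_zero]
    obtain ⟨y, hy⟩ := Submodule.mem_one.1 hx0
    exact Submodule.mem_one.2 ⟨y, by
      rw [← hy]; exact ((ExteriorAlgebra.map f).commutes y).symm⟩
  | succ m ih =>
    intro x hx
    have hx0 : x ∈ LinearMap.range (ExteriorAlgebra.ι ℚ (M := V n)) ^ m *
        LinearMap.range (ExteriorAlgebra.ι ℚ (M := V n)) := by
      rw [← pow_succ]; exact hx
    show ExteriorAlgebra.map f x ∈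
      LinearMap.range (ExteriorAlgebra.ι ℚ (M := V n)) ^ (m+1)
    rw [pow_succ]
    refine Submodule.mul_induction_on hx0 ?_ ?_
    · intro a ha b hb
      rw [map_mul]
      refine Submodule.mul_mem_mul (ih a ha) ?_
      obtain ⟨v, hv⟩ := hb
      exact ⟨f v, by rw [← hv, ExteriorAlgebra.map_apply_ι]⟩
    · intro a b ha hb
      rw [map_add]; exact add_mem ha hb

/-- The linear endomorphism of `⋀^m V` induced by a linear endomorphism of `V`
(diagonal action on the exterior power). -/
def extMap (n : ℕ) (m : ℕ) (f : V n →ₗ[ℚ] V n) :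
    ⋀[ℚ]^m (V n) →ₗ[ℚ] ⋀[ℚ]^m (V n) :=
  LinearMap.restrict (ExteriorAlgebra.map f).toLinearMap (extMap_mem n f m)

/-- The representation of `G` on `⋀^m V` induced by a representation on `V`. -/
def extRepHom {G : Type} [Group G] (n m : ℕ) (ρ : G →* (V n →ₗ[ℚ] V n)) :
    G →* (⋀[ℚ]^m (V n) →ₗ[ℚ] ⋀[ℚ]^m (V n)) where
  toFun g := extMap n m (ρ g)
  map_one' := by
    refine LinearMap.ext fun x => Subtype.ext ?_
    show ExteriorAlgebra.map (ρ 1) x.1 = x.1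
    rw [map_one]
    show ExteriorAlgebra.map LinearMap.id x.1 = x.1
    rw [ExteriorAlgebra.map_id]
    rfl
  map_mul' g h := by
    refine LinearMap.ext fun x => Subtype.ext ?_
    show ExteriorAlgebra.map (ρ (g * h)) x.1
      = ExteriorAlgebra.map (ρ g) (ExteriorAlgebra.map (ρ h) x.1)
    rw [map_mul]
    show ExteriorAlgebra.map (ρ g ∘ₗ ρ h) x.1 = _
    rw [← ExteriorAlgebra.map_comp_map]
    rfl

section Z

variable {G : Type} [Group G] (n : ℕ)

/-- The twisted cochain `z_λ`: `z_λ = z_{λ₁}(first block) ∧ ρ(g₁⋯g_{λ₁})(z_{rest}(rest))`. -/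
def zList (t : G → (V n →ₗ[ℚ] V n ⊗[ℚ] V n)) (ρ : G →* (V n →ₗ[ℚ] V n)) :
    (l : List ℕ) → (Fin l.sum → G) → ⋀[ℚ]^(l.sum) (V n)
  | [] => fun _ => ecast n (by simp) (oneE n)
  | a :: l => fun g =>
    ecast n (by simp)
      (wedgeMap n a l.sum
        (zpGen n t ρ a (fun i => g ⟨i.1, by
          have h2 : (a :: l).sum = a + l.sum := by simp
          omega⟩))
        (extMap n l.sum
          (ρ ((List.ofFn (fun i : Fin a => g ⟨i.1, by
            have h2 : (a :: l).sum = a + l.sum := by simp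
            omega⟩)).prod))
          (zList t ρ l (fun i => g ⟨a + i.1, by
            have h1 := i.2
            have h2 : (a :: l).sum = a + l.sum := by simp
            omega⟩))))

end Z

def permRep {G : Type} [Group G] {n : ℕ} (perm : G →* Equiv.Perm (Fin n)) :
    G →* (V n →ₗ[ℚ] V n) where
  toFun g := LinearMap.funLeft ℚ ℚ ((perm g)⁻¹ : Equiv.Perm (Fin n))
  map_one' := by
    refine LinearMap.ext fun v => funext fun i => ?_
    show v ((perm 1)⁻¹ i) = v i
    rw [map_one, inv_one]
    rfl
  map_mul' g h := by
    refine LinearMap.ext fun v => funext fun i => ?_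
    show v ((perm (g*h))⁻¹ i) = v ((perm h)⁻¹ ((perm g)⁻¹ i))
    rw [map_mul, mul_inv_rev]
    rfl

def dcb {G : Type} [Group G] {M : Type} [AddCommGroup M] [Module ℚ M]
    (ρ : G →* (M →ₗ[ℚ] M)) (q : ℕ) (f : (Fin q → G) → M) : (Fin (q+1) → G) → M :=
  fun g => ρ (g 0) (f (fun i => g i.succ)) +
    ∑ j : Fin (q+1), ((-1 : ℚ) ^ ((j : ℕ) + 1)) • f (Fin.contractNth j (· * ·) g)

def IsCoboundary {G : Type} [Group G] {M : Type} [AddCommGroup M] [Module ℚ M]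
    (ρ : G →* (M →ₗ[ℚ] M)) : (q : ℕ) → ((Fin q → G) → M) → Prop
  | 0, f => f = 0
  | (q+1), f => ∃ b : (Fin q → G) → M, f = dcb ρ q b

def trivRep (G : Type) [Group G] (M : Type) [AddCommGroup M] [Module ℚ M] :
    G →* (M →ₗ[ℚ] M) := 1

def posParts (l : List ℕ) : List ℕ := l.filter (fun a => decide (0 < a))

lemma posParts_sum (l : List ℕ) : (posParts l).sum = l.sum := by
  induction l with
  | nil => rfl
  | cons a l ih =>
    by_cases h : 0 < a
    · simp only [posParts, List.filter_cons, h] at ih ⊢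
      simp only [if_pos, decide_eq_true_eq, List.sum_cons]
      rw [ih]
    · have ha : a = 0 := by omega
      subst ha
      simp only [posParts, List.filter_cons] at ih ⊢
      simpa using ih

/-- Partitions of `q` into `n - q` nonnegative parts, written in decreasing order. -/
def Pnq (n q : ℕ) : Type :=
  {l : List ℕ // l.length = n - q ∧ l.Pairwise (· ≥ ·) ∧ l.sum = q}

/-- Pullback to `Fin q` blocks of the partition cochain `c_λ` (using the positive parts). -/
def cPart {G : Type} [Group G] (n q : ℕ) (t : G → (V n →ₗ[ℚ] V n ⊗[ℚ] V n))
    (lam : Pnq n q) (g : Fin q → G) : ⋀[ℚ]^q (V n) :=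
  ecast n (by rw [posParts_sum, lam.2.2.2])
    (cList n t (posParts lam.1)
      (fun i => g (Fin.cast (by rw [posParts_sum, lam.2.2.2]) i)))

/-- The twisted partition cochain `z_λ` for a partition given as a list of positive parts. -/
def zPart {G : Type} [Group G] (n q : ℕ) (t : G → (V n →ₗ[ℚ] V n ⊗[ℚ] V n))
    (ρ : G →* (V n →ₗ[ℚ] V n)) (l : List ℕ) (h : l.sum = q) (g : Fin q → G) :
    ⋀[ℚ]^q (V n) :=
  ecast n h (zList n t ρ l (fun i => g (Fin.cast h i)))






lemma telesc {M : Type} [AddCommGroup M] [Module ℚ M] (T : ℕ → M) :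
    ∀ q : ℕ, ∑ j ∈ Finset.range (q+1), ((-1:ℚ)^(j+1)) • (T j + T (j+1))
      = -T 0 + ((-1:ℚ)^(q+1)) • T (q+1) := by
  intro q
  induction q with
  | zero => simp [smul_add]
  | succ q ih =>
    rw [Finset.sum_range_succ, ih]
    have h1 : ((-1:ℚ)^(q+1+1)) = -((-1:ℚ)^(q+1)) := by ring
    rw [h1, smul_add, neg_smul, neg_smul]
    abel

lemma cocycle_mult {G : Type} [Group G] {M : Type} [AddCommGroup M] [Module ℚ M]
    {W : Type} [AddCommGroup W] [Module ℚ W]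
    (q : ℕ) (F : MultilinearMap ℚ (fun _ : Fin q => W) M) (t : G → W)
    (ht : ∀ g h : G, t (g * h) = t g + t h) :
    dcb (trivRep G M) q (fun g => F (fun k => t (g k))) = 0 := by
  funext g
  set A : ℕ → M := fun j =>
    if h : j ≤ q then F (fun k => t (g ((⟨j, Nat.lt_succ_of_le h⟩ : Fin (q+1)).succAbove k)))
    else 0 with hA
  have claim0 : F (fun k => t (g k.succ)) = A 0 := by
    rw [hA]
    simp only [Nat.zero_le, dif_pos]
    congr 1
  have claim : ∀ j : Fin (q+1),
      F (fun k => t (Fin.contractNth j (· * ·) g k)) = A (j:ℕ) + A ((j:ℕ)+1) := by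
    intro j
    rcases Nat.lt_or_ge (j:ℕ) q with hj | hj
    · -- j < q
      have jq : (j:ℕ) ≤ q := Nat.le_of_lt hj
      set j' : Fin q := ⟨(j:ℕ), hj⟩ with hj'
      set m : Fin q → W := fun k => t (g (j.succAbove k)) with hm
      set x : W := t (g (Fin.castSucc j')) with hx
      set y : W := t (g (Fin.succ j')) with hy
      have hmy : m j' = y := by
        show t (g (j.succAbove j')) = y
        rw [Fin.succAbove_of_le_castSucc j j' (by simp [Fin.le_def, hj'])]
      have key : (fun k => t (Fin.contractNth j (· * ·) g k)) = Function.update m j' (x + y) := by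
        funext k
        rcases lt_trichotomy (k:ℕ) (j:ℕ) with h | h | h
        · rw [Function.update_of_ne (by simp [Fin.ext_iff, hj']; omega)]
          show t (Fin.contractNth j (· * ·) g k) = t (g (j.succAbove k))
          rw [Fin.contractNth_apply_of_lt _ _ _ _ h,
            Fin.succAbove_of_castSucc_lt j k (by simp [Fin.lt_def]; omega)]
        · have hk : k = j' := by simp [Fin.ext_iff, hj', h]
          rw [hk, Function.update_self]
          show t (Fin.contractNth j (· * ·) g j') = x + y
          rw [Fin.contractNth_apply_of_eq _ _ _ _ (by simp [hj']), ht, hx, hy]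
        · rw [Function.update_of_ne (by simp [Fin.ext_iff, hj']; omega)]
          show t (Fin.contractNth j (· * ·) g k) = t (g (j.succAbove k))
          rw [Fin.contractNth_apply_of_gt _ _ _ _ h,
            Fin.succAbove_of_le_castSucc j k (by simp [Fin.le_def]; omega)]
      have h1 : Function.update m j' y = m := by rw [← hmy, Function.update_eq_self]
      have h2 : Function.update m j' x
          = fun k => t (g ((⟨(j:ℕ)+1, by omega⟩ : Fin (q+1)).succAbove k)) := by
        funext k
        rcases eq_or_ne k j' with hk | hk
        · rw [hk, Function.update_self]
          rw [Fin.succAbove_of_castSucc_lt _ j' (by simp [Fin.lt_def, hj']), hx]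
        · rw [Function.update_of_ne hk]
          show t (g (j.succAbove k)) = _
          have hkj : (k:ℕ) ≠ (j:ℕ) := by simpa [Fin.ext_iff, hj'] using hk
          rcases Nat.lt_or_ge (k:ℕ) (j:ℕ) with h | h
          · rw [Fin.succAbove_of_castSucc_lt j k (by simp [Fin.lt_def]; omega),
              Fin.succAbove_of_castSucc_lt _ k (by simp [Fin.lt_def]; omega)]
          · rw [Fin.succAbove_of_le_castSucc j k (by simp [Fin.le_def]; omega),
              Fin.succAbove_of_le_castSucc _ k (by simp [Fin.le_def]; omega)]
      have hAj : A (j:ℕ) = F m := by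
        rw [hA]
        simp only [dif_pos jq]
        rfl
      have hAj1 : A ((j:ℕ)+1) = F (Function.update m j' x) := by
        rw [hA, h2]
        simp only [dif_pos (Nat.succ_le_of_lt hj)]
      rw [key, MultilinearMap.map_update_add, h1, hAj, hAj1]
      abel
    · -- j = q
      have hjq : (j:ℕ) = q := le_antisymm (Nat.lt_succ_iff.1 j.isLt) hj
      have hterm : (fun k => t (Fin.contractNth j (· * ·) g k))
          = fun k => t (g ((⟨(j:ℕ), j.isLt⟩ : Fin (q+1)).succAbove k)) := by
        funext k
        rw [Fin.contractNth_apply_of_lt _ _ _ _ (by omega),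
          Fin.succAbove_of_castSucc_lt _ k (by simp [Fin.lt_def]; omega)]
      have hA1 : A ((j:ℕ)+1) = 0 := by rw [hA]; exact dif_neg (by omega)
      have hA0 : A (j:ℕ) = F (fun k => t (g ((⟨(j:ℕ), j.isLt⟩ : Fin (q+1)).succAbove k))) := by
        rw [hA]
        simp only [dif_pos (le_of_eq hjq)]
      rw [hterm, hA1, hA0, add_zero]
  show (trivRep G M) (g 0) (F fun k => t (g k.succ)) + _ = 0
  have htriv : (trivRep G M) (g 0) (F fun k => t (g k.succ)) = F fun k => t (g k.succ) := rfl
  rw [htriv, claim0]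
  show A 0 + ∑ j : Fin (q+1), ((-1:ℚ) ^ ((j:ℕ)+1)) • _ = 0
  rw [Finset.sum_congr rfl (fun (j : Fin (q+1)) _ => by
      show ((-1:ℚ) ^ ((j:ℕ)+1)) • (F fun k => t (Fin.contractNth j (· * ·) g k))
        = ((-1:ℚ) ^ ((j:ℕ)+1)) • (A (j:ℕ) + A ((j:ℕ)+1))
      rw [claim j]),
    Fin.sum_univ_eq_sum_range (fun j => ((-1:ℚ)^(j+1)) • (A j + A (j+1))),
    telesc, hA]
  simp



abbrev Wn (n : ℕ) : Type := V n →ₗ[ℚ] V n ⊗[ℚ] V n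

lemma expandLeft_add (n m : ℕ) (u v : Wn n) :
    expandLeft n m (u + v) = expandLeft n m u + expandLeft n m v := by
  unfold expandLeft
  rw [LinearMap.rTensor_add]
  exact LinearMap.comp_add _ _ _

lemma expandLeft_smul (n m : ℕ) (c : ℚ) (u : Wn n) :
    expandLeft n m (c • u) = c • expandLeft n m u := by
  unfold expandLeft
  rw [LinearMap.rTensor_smul]
  exact LinearMap.comp_smul _ _ _

lemma Bfun_add (n : ℕ) : ∀ (p : ℕ) [DecidableEq (Fin p)] (u : Fin p → Wn n) (k : Fin p) (a b : Wn n),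
    Bfun n p (Function.update u k (a + b))
      = Bfun n p (Function.update u k a) + Bfun n p (Function.update u k b) := by
  intro p
  induction p with
  | zero => intro _ u k; exact k.elim0
  | succ p ih =>
    intro inst u k a b
    rcases Fin.eq_zero_or_eq_succ k with hk | ⟨j, hk⟩
    · subst hk
      show expandLeft n p (Function.update u 0 (a+b) 0) ∘ₗ
          Bfun n p (fun i => Function.update u 0 (a+b) i.succ) = _
      have htail : ∀ c : Wn n, (fun i : Fin p => Function.update u 0 c i.succ)
          = fun i => u i.succ := by
        intro c; funext i; rw [Function.update_of_ne (Fin.succ_ne_zero i)]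
      rw [Function.update_self, htail, expandLeft_add, LinearMap.add_comp]
      rw [show Bfun n (p+1) (Function.update u 0 a)
          = expandLeft n p (Function.update u 0 a 0) ∘ₗ
            Bfun n p (fun i => Function.update u 0 a i.succ) from rfl]
      rw [show Bfun n (p+1) (Function.update u 0 b)
          = expandLeft n p (Function.update u 0 b 0) ∘ₗ
            Bfun n p (fun i => Function.update u 0 b i.succ) from rfl]
      rw [Function.update_self, Function.update_self, htail, htail]
    · subst hk
      have hhead : ∀ c : Wn n, Function.update u j.succ c 0 = u 0 :=
        fun c => Function.update_of_ne (Fin.succ_ne_zero j).symm c u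
      have htail : ∀ c : Wn n, (fun i : Fin p => Function.update u j.succ c i.succ)
          = Function.update (fun i : Fin p => u i.succ) j c := by
        intro c; funext i
        rcases eq_or_ne i j with h | h
        · subst h; rw [Function.update_self, Function.update_self]
        · rw [Function.update_of_ne h,
            Function.update_of_ne (fun hc => h (Fin.succ_injective _ hc))]
      show expandLeft n p (Function.update u j.succ (a+b) 0) ∘ₗ
          Bfun n p (fun i => Function.update u j.succ (a+b) i.succ) = _
      rw [hhead, htail, ih _ j a b, LinearMap.comp_add]
      rw [show Bfun n (p+1) (Function.update u j.succ a)
          = expandLeft n p (Function.update u j.succ a 0) ∘ₗ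
            Bfun n p (fun i => Function.update u j.succ a i.succ) from rfl]
      rw [show Bfun n (p+1) (Function.update u j.succ b)
          = expandLeft n p (Function.update u j.succ b 0) ∘ₗ
            Bfun n p (fun i => Function.update u j.succ b i.succ) from rfl]
      rw [hhead, hhead, htail, htail]

lemma Bfun_smul (n : ℕ) : ∀ (p : ℕ) [DecidableEq (Fin p)] (u : Fin p → Wn n) (k : Fin p)
    (c : ℚ) (a : Wn n),
    Bfun n p (Function.update u k (c • a)) = c • Bfun n p (Function.update u k a) := by
  intro p
  induction p with
  | zero => intro _ u k; exact k.elim0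
  | succ p ih =>
    intro inst u k c a
    rcases Fin.eq_zero_or_eq_succ k with hk | ⟨j, hk⟩
    · subst hk
      show expandLeft n p (Function.update u 0 (c • a) 0) ∘ₗ
          Bfun n p (fun i => Function.update u 0 (c • a) i.succ) = _
      have htail : ∀ d : Wn n, (fun i : Fin p => Function.update u 0 d i.succ)
          = fun i => u i.succ := by
        intro d; funext i; rw [Function.update_of_ne (Fin.succ_ne_zero i)]
      rw [Function.update_self, htail, expandLeft_smul, LinearMap.smul_comp]
      rw [show Bfun n (p+1) (Function.update u 0 a)
          = expandLeft n p (Function.update u 0 a 0) ∘ₗ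
            Bfun n p (fun i => Function.update u 0 a i.succ) from rfl]
      rw [Function.update_self, htail]
    · subst hk
      have hhead : ∀ d : Wn n, Function.update u j.succ d 0 = u 0 :=
        fun d => Function.update_of_ne (Fin.succ_ne_zero j).symm d u
      have htail : ∀ d : Wn n, (fun i : Fin p => Function.update u j.succ d i.succ)
          = Function.update (fun i : Fin p => u i.succ) j d := by
        intro d; funext i
        rcases eq_or_ne i j with h | h
        · subst h; rw [Function.update_self, Function.update_self]
        · rw [Function.update_of_ne h,
            Function.update_of_ne (fun hc => h (Fin.succ_injective _ hc))]
      show expandLeft n p (Function.update u j.succ (c • a) 0) ∘ₗ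
          Bfun n p (fun i => Function.update u j.succ (c • a) i.succ) = _
      rw [hhead, htail, ih _ j c a, LinearMap.comp_smul]
      rw [show Bfun n (p+1) (Function.update u j.succ a)
          = expandLeft n p (Function.update u j.succ a 0) ∘ₗ
            Bfun n p (fun i => Function.update u j.succ a i.succ) from rfl]
      rw [hhead, htail]

lemma rp_add (n p : ℕ) (u v : V n →ₗ[ℚ] (Tp n (p+1) : Type)) :
    rp n p (u + v) = rp n p u + rp n p v := by
  unfold rp
  rw [← Finset.sum_add_distrib]
  exact Finset.sum_congr rfl fun i _ => by
    rw [LinearMap.add_apply]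
    exact (congrArg _ (map_add _ _ _)).trans (map_add _ _ _)

lemma rp_smul (n p : ℕ) (c : ℚ) (u : V n →ₗ[ℚ] (Tp n (p+1) : Type)) :
    rp n p (c • u) = c • rp n p u := by
  unfold rp
  rw [Finset.smul_sum]
  exact Finset.sum_congr rfl fun i _ => by
    rw [LinearMap.smul_apply]
    exact (congrArg _ (map_smul _ _ _)).trans (map_smul _ _ _)

/-- `cpGen` packaged as a multilinear map in the `p` arguments. -/
def cpGenM (n p : ℕ) : MultilinearMap ℚ (fun _ : Fin p => Wn n) (⋀[ℚ]^p (V n)) where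
  toFun u := pip n p (rp n p (Bfun n p u))
  map_update_add' u k a b := by
    show pip n p (rp n p (Bfun n p (Function.update u k (a + b))))
      = pip n p (rp n p (Bfun n p (Function.update u k a)))
        + pip n p (rp n p (Bfun n p (Function.update u k b)))
    rw [Bfun_add, rp_add, map_add]
  map_update_smul' u k c a := by
    show pip n p (rp n p (Bfun n p (Function.update u k (c • a))))
      = c • pip n p (rp n p (Bfun n p (Function.update u k a)))
    rw [Bfun_smul, rp_smul, map_smul]

lemma cpGen_eq {G : Type} [Group G] (n : ℕ) (t : G → Wn n) (p : ℕ) (g : Fin p → G) :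
    cpGen n t p g = cpGenM n p (fun k => t (g k)) := rfl

/-- `cList` packaged as a multilinear map. -/
def cListM (n : ℕ) : (l : List ℕ) →
    MultilinearMap ℚ (fun _ : Fin l.sum => Wn n) (⋀[ℚ]^(l.sum) (V n))
  | [] =>
    letI : IsEmpty (Fin ([] : List ℕ).sum) := ⟨fun i => absurd i.2 (by simp)⟩
    MultilinearMap.constOfIsEmpty ℚ _ (ecast n (by simp) (oneE n))
  | a :: l =>
    (((ecast n (by simp : a + l.sum = (a :: l).sum)).comp
        (TensorProduct.lift (wedgeMap n a l.sum))).compMultilinearMap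
      ((cpGenM n a).domCoprod (cListM n l))).domDomCongr
        (finSumFinEquiv.trans (finCongr (by simp)))

lemma cList_eq {G : Type} [Group G] (n : ℕ) (t : G → Wn n) :
    ∀ (l : List ℕ) (g : Fin l.sum → G),
      cList n t l g = cListM n l (fun i => t (g i)) := by
  intro l
  induction l with
  | nil => intro g; rfl

  | cons a l ih =>
    intro g
    show ecast n _ _ = _
    rw [show cListM n (a :: l) (fun i => t (g i))
        = ecast n (by simp : a + l.sum = (a :: l).sum)
            (TensorProduct.lift (wedgeMap n a l.sum)
              ((cpGenM n a) (fun i => t (g ((finSumFinEquiv.trans (finCongr (by simp)))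
                  (Sum.inl i)))) ⊗ₜ[ℚ]
               (cListM n l) (fun i => t (g ((finSumFinEquiv.trans (finCongr (by simp)))
                  (Sum.inr i)))))) from rfl]
    rw [TensorProduct.lift.tmul, ih]
    rfl



lemma aMap_mul (n : ℕ) (γ δ : FreeGroup (Fin n)) :
    aMap n (γ * δ) = aMap n γ + aMap n δ := by
  unfold aMap; rw [map_mul]; rfl

lemma aMap_inv (n : ℕ) (γ : FreeGroup (Fin n)) : aMap n γ⁻¹ = -aMap n γ := by
  unfold aMap; rw [map_inv]; rfl

lemma aMap_of (n : ℕ) (i : Fin n) : aMap n (FreeGroup.of i) = Xz n i := by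
  unfold aMap Theta
  have h : Theta n (FreeGroup.of i) = ((Xz n i, 0) : Mn n) := FreeGroup.lift_apply_of
  exact congrArg Prod.fst h

lemma addHom_ext_X {n : ℕ} {K : Type} [AddCommGroup K] {f g : Hz n →+ K}
    (h : ∀ i, f (Xz n i) = g (Xz n i)) : f = g := by
  apply Finsupp.addHom_ext
  intro i m
  have hm : (Finsupp.single i m : Hz n) = m • Xz n i := by
    simp [Xz]
  rw [hm, map_zsmul, map_zsmul, h]

lemma addEquiv_ext_X {n : ℕ} {e1 e2 : AddAut (Hz n)}
    (h : ∀ i, e1 (Xz n i) = e2 (Xz n i)) : e1 = e2 := by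
  apply AddEquiv.ext
  intro x
  have h2 : e1.toAddMonoidHom = e2.toAddMonoidHom := addHom_ext_X h
  exact congrFun (congrArg (fun (f : Hz n →+ Hz n) => (f : Hz n → Hz n)) h2) x

section Braid

variable {n : ℕ}
variable (Φ : MulAut (FreeGroup (Fin n)) → (Hz n →+ Hz n))
variable (hΦ : ∀ (φ : MulAut (FreeGroup (Fin n))) (γ : FreeGroup (Fin n)),
      Φ φ (aMap n γ) = aMap n (φ γ))

include hΦ

lemma Phi_comp (φ ψ : MulAut (FreeGroup (Fin n))) (x : Hz n) :
    Φ (φ * ψ) x = Φ φ (Φ ψ x) := by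
  have : Φ (φ * ψ) = (Φ φ).comp (Φ ψ) := by
    apply addHom_ext_X
    intro i
    rw [← aMap_of, hΦ, AddMonoidHom.comp_apply, hΦ, hΦ]
    rfl
  rw [this]; rfl

lemma Phi_one (x : Hz n) : Φ 1 x = x := by
  have : Φ 1 = AddMonoidHom.id (Hz n) := by
    apply addHom_ext_X
    intro i
    rw [← aMap_of, hΦ]
    rfl
  rw [this]; rfl

lemma Phi_inv_comp (φ : MulAut (FreeGroup (Fin n))) (x : Hz n) :
    Φ φ⁻¹ (Φ φ x) = x := by
  rw [← Phi_comp Φ hΦ, inv_mul_cancel, Phi_one Φ hΦ]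

/-- The (older) multiplicative group structure on additive automorphisms. -/
instance addAutMulGroup (A : Type) [Add A] : Group (AddAut A) where
  mul g h := h.trans g
  one := AddEquiv.refl _
  inv := AddEquiv.symm
  mul_assoc _ _ _ := rfl
  one_mul _ := rfl
  mul_one _ := rfl
  inv_mul_cancel := AddEquiv.self_trans_symm

@[simp]
lemma addAutMul_apply {A : Type} [Add A] (e1 e2 : AddAut A) (x : A) :
    (e1 * e2) x = e1 (e2 x) := rfl

/-- `Φ` as a homomorphism to additive automorphisms. -/
def PhiAut : MulAut (FreeGroup (Fin n)) →* AddAut (Hz n) :=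
  MonoidHom.mk' (fun φ =>
    { toFun := Φ φ
      invFun := Φ φ⁻¹
      left_inv := fun x => Phi_inv_comp Φ hΦ φ x
      right_inv := fun x => by
        have := Phi_inv_comp Φ hΦ φ⁻¹ x
        rwa [inv_inv] at this
      map_add' := (Φ φ).map_add })
    (fun φ ψ => by
      apply addEquiv_ext_X
      intro i
      exact Phi_comp Φ hΦ φ ψ (Xz n i))

/-- Permutation action on `Hz n` as a homomorphism to additive automorphisms. -/
def permAut : Equiv.Perm (Fin n) →* AddAut (Hz n) :=
  MonoidHom.mk' (fun σ => Finsupp.domCongr σ)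
    (fun σ σ' => by
      apply addEquiv_ext_X
      intro i
      show _ = Finsupp.domCongr σ (Finsupp.domCongr σ' (Xz n i))
      simp [Xz, Finsupp.domCongr_apply, Finsupp.equivMapDomain_single])

end Braid



section Braid2

variable {n : ℕ} (hn : 2 ≤ n)
    (β : Fin (n-1) → MulAut (FreeGroup (Fin n)))
    (hβ : ∀ (i : Fin (n-1)) (h1 : (i : ℕ) < n) (h2 : (i : ℕ) + 1 < n),
      β i (FreeGroup.of ⟨i, h1⟩) = FreeGroup.of ⟨(i : ℕ) + 1, h2⟩ ∧
      β i (FreeGroup.of ⟨(i : ℕ) + 1, h2⟩) =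
        (FreeGroup.of (⟨(i : ℕ) + 1, h2⟩ : Fin n))⁻¹ * FreeGroup.of ⟨i, h1⟩ *
          FreeGroup.of ⟨(i : ℕ) + 1, h2⟩ ∧
      ∀ j : Fin n, (j : ℕ) ≠ (i : ℕ) → (j : ℕ) ≠ (i : ℕ) + 1 →
        β i (FreeGroup.of j) = FreeGroup.of j)
    (ξ : Braid (n-1) →* MulAut (FreeGroup (Fin n)))
    (hξ : ∀ i : Fin (n-1), ξ (sigma i) = β i)
    (perm : Braid (n-1) →* Equiv.Perm (Fin n))
    (hperm : ∀ (i : Fin (n-1)) (h1 : (i : ℕ) < n) (h2 : (i : ℕ) + 1 < n),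
      perm (sigma i) = Equiv.swap ⟨i, h1⟩ ⟨(i : ℕ) + 1, h2⟩)
    (Φ : MulAut (FreeGroup (Fin n)) → (Hz n →+ Hz n))
    (hΦ : ∀ (φ : MulAut (FreeGroup (Fin n))) (γ : FreeGroup (Fin n)),
      Φ φ (aMap n γ) = aMap n (φ γ))

include hβ hξ hperm hΦ

lemma PhiAut_eq_permAut : ∀ b : Braid (n-1), PhiAut Φ hΦ (ξ b) = permAut (perm b) := by
  have key : (PhiAut Φ hΦ).comp ξ = (permAut (n := n)).comp perm := by
    apply PresentedGroup.ext
    intro i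
    show PhiAut Φ hΦ (ξ (sigma i)) = permAut (perm (sigma i))
    have h1 : (i : ℕ) < n := lt_of_lt_of_le i.2 (Nat.sub_le n 1)
    have h2 : (i : ℕ) + 1 < n := by
      have := i.2; omega
    rw [hξ i, hperm i h1 h2]
    apply addEquiv_ext_X
    intro j
    show Φ (β i) (Xz n j) = permAut (Equiv.swap ⟨i, h1⟩ ⟨(i:ℕ)+1, h2⟩) (Xz n j)
    have hperm_apply : permAut (Equiv.swap (⟨i, h1⟩ : Fin n) ⟨(i:ℕ)+1, h2⟩) (Xz n j)
        = Xz n (Equiv.swap (⟨i, h1⟩ : Fin n) ⟨(i:ℕ)+1, h2⟩ j) := by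
      show Finsupp.domCongr _ (Xz n j) = _
      simp [Xz, Finsupp.domCongr_apply, Finsupp.equivMapDomain_single]
    rw [hperm_apply, ← aMap_of, hΦ]
    obtain ⟨hb1, hb2, hb3⟩ := hβ i h1 h2
    rcases eq_or_ne j (⟨i, h1⟩ : Fin n) with hj | hj
    · rw [hj, hb1, Equiv.swap_apply_left, aMap_of]
    · rcases eq_or_ne j (⟨(i:ℕ)+1, h2⟩ : Fin n) with hj2 | hj2
      · rw [hj2, hb2, Equiv.swap_apply_right, aMap_mul, aMap_mul, aMap_inv,
          ]
        simp only [aMap_of]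
        abel
      · rw [hb3 j (fun hc => hj (Fin.ext hc)) (fun hc => hj2 (Fin.ext hc)),
          Equiv.swap_apply_of_ne_of_ne hj hj2, aMap_of]
  intro b
  exact congrFun (congrArg (fun (f : Braid (n-1) →* AddAut (Hz n)) => (f : Braid (n-1) → AddAut (Hz n))) key) b

lemma Phi_ker_id : ∀ b ∈ perm.ker, Φ (ξ b) = AddMonoidHom.id (Hz n) := by
  intro b hb
  have h := PhiAut_eq_permAut β hβ ξ hξ perm hperm Φ hΦ b
  rw [MonoidHom.mem_ker.1 hb, map_one] at h
  apply AddMonoidHom.ext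
  intro x
  have := congrFun (congrArg (fun (e : AddAut (Hz n)) => (e : Hz n → Hz n)) h) x
  exact this

lemma aMap_ker_inv : ∀ b ∈ perm.ker, ∀ γ, aMap n ((ξ b) γ) = aMap n γ := by
  intro b hb γ
  rw [← hΦ (ξ b) γ, Phi_ker_id β hβ ξ hξ perm hperm Φ hΦ b hb]
  rfl

variable (τ : MulAut (FreeGroup (Fin n)) → (Hz n →+ HHz n))
    (hτ : ∀ (φ : MulAut (FreeGroup (Fin n))) (γ : FreeGroup (Fin n)),
      τ φ (aMap n γ) = theta2 n γ -
        (TensorProduct.map (Φ φ).toIntLinearMap (Φ φ).toIntLinearMap)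
          (theta2 n (φ⁻¹ γ)))

include hτ

lemma tau_simple : ∀ b ∈ perm.ker, ∀ γ,
    τ (ξ b) (aMap n γ) = theta2 n γ - theta2 n ((ξ b)⁻¹ γ) := by
  intro b hb γ
  rw [hτ (ξ b) γ, Phi_ker_id β hβ ξ hξ perm hperm Φ hΦ b hb]
  rw [show (AddMonoidHom.id (Hz n)).toIntLinearMap = LinearMap.id from rfl,
    TensorProduct.map_id]
  rfl

lemma tau_mul : ∀ b ∈ perm.ker, ∀ c ∈ perm.ker,
    τ (ξ (b * c)) = τ (ξ b) + τ (ξ c) := by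
  intro b hb c hc
  apply addHom_ext_X
  intro i
  set γ := FreeGroup.of i with hγ
  rw [← aMap_of n i]
  show τ (ξ (b * c)) (aMap n γ) = (τ (ξ b) + τ (ξ c)) (aMap n γ)
  rw [AddMonoidHom.add_apply]
  rw [tau_simple β hβ ξ hξ perm hperm Φ hΦ τ hτ (b*c) (mul_mem hb hc) γ]
  rw [tau_simple β hβ ξ hξ perm hperm Φ hΦ τ hτ b hb γ]
  have haM : aMap n γ = aMap n ((ξ b)⁻¹ γ) := by
    have := aMap_ker_inv β hβ ξ hξ perm hperm Φ hΦ b⁻¹ (inv_mem hb) γ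
    rw [map_inv] at this
    exact this.symm
  rw [haM, tau_simple β hβ ξ hξ perm hperm Φ hΦ τ hτ c hc ((ξ b)⁻¹ γ)]
  have hcomp : (ξ (b * c))⁻¹ γ = (ξ c)⁻¹ ((ξ b)⁻¹ γ) := by
    rw [map_mul, mul_inv_rev, MulAut.mul_apply]
  rw [hcomp]
  abel

end Braid2

lemma tauQ_add (n : ℕ) (t1 t2 : Hz n →+ HHz n) :
    tauQ n (t1 + t2) = tauQ n t1 + tauQ n t2 := by
  unfold tauQ
  rw [← map_add]
  congr 1
  funext i
  rw [Pi.add_apply, AddMonoidHom.add_apply, map_add]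


theorem stmt5 (n : ℕ) (hn : 2 ≤ n)
    (β : Fin (n-1) → MulAut (FreeGroup (Fin n)))
    (hβ : ∀ (i : Fin (n-1)) (h1 : (i : ℕ) < n) (h2 : (i : ℕ) + 1 < n),
      β i (FreeGroup.of ⟨i, h1⟩) = FreeGroup.of ⟨(i : ℕ) + 1, h2⟩ ∧
      β i (FreeGroup.of ⟨(i : ℕ) + 1, h2⟩) =
        (FreeGroup.of (⟨(i : ℕ) + 1, h2⟩ : Fin n))⁻¹ * FreeGroup.of ⟨i, h1⟩ *
          FreeGroup.of ⟨(i : ℕ) + 1, h2⟩ ∧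
      ∀ j : Fin n, (j : ℕ) ≠ (i : ℕ) → (j : ℕ) ≠ (i : ℕ) + 1 →
        β i (FreeGroup.of j) = FreeGroup.of j)
    (ξ : Braid (n-1) →* MulAut (FreeGroup (Fin n)))
    (hξ : ∀ i : Fin (n-1), ξ (sigma i) = β i)
    (perm : Braid (n-1) →* Equiv.Perm (Fin n))
    (hperm : ∀ (i : Fin (n-1)) (h1 : (i : ℕ) < n) (h2 : (i : ℕ) + 1 < n),
      perm (sigma i) = Equiv.swap ⟨i, h1⟩ ⟨(i : ℕ) + 1, h2⟩)
    (Φ : MulAut (FreeGroup (Fin n)) → (Hz n →+ Hz n))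
    (hΦ : ∀ (φ : MulAut (FreeGroup (Fin n))) (γ : FreeGroup (Fin n)),
      Φ φ (aMap n γ) = aMap n (φ γ))
    (τ : MulAut (FreeGroup (Fin n)) → (Hz n →+ HHz n))
    (hτ : ∀ (φ : MulAut (FreeGroup (Fin n))) (γ : FreeGroup (Fin n)),
      τ φ (aMap n γ) = theta2 n γ -
        (TensorProduct.map (Φ φ).toIntLinearMap (Φ φ).toIntLinearMap)
          (theta2 n (φ⁻¹ γ)))
 :
    (∀ p : ℕ, 1 ≤ p →
      dcb (trivRep ↥perm.ker (⋀[ℚ]^p (V n))) p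
        (cpGen n (fun g : ↥perm.ker => tauQ n (τ (ξ (g : Braid (n-1))))) p) = 0) ∧
    (∀ l : List ℕ, l.Pairwise (· ≥ ·) → (∀ a ∈ l, 0 < a) →
      dcb (trivRep ↥perm.ker (⋀[ℚ]^(l.sum) (V n))) l.sum
        (cList n (fun g : ↥perm.ker => tauQ n (τ (ξ (g : Braid (n-1))))) l) = 0) := by
  have ht : ∀ g h : ↥perm.ker,
      (fun g : ↥perm.ker => tauQ n (τ (ξ (g : Braid (n-1))))) (g * h)
        = (fun g : ↥perm.ker => tauQ n (τ (ξ (g : Braid (n-1))))) g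
          + (fun g : ↥perm.ker => tauQ n (τ (ξ (g : Braid (n-1))))) h := by
    intro g h
    show tauQ n (τ (ξ ((g : Braid (n-1)) * (h : Braid (n-1))))) = _
    rw [tau_mul β hβ ξ hξ perm hperm Φ hΦ τ hτ _ g.2 _ h.2, tauQ_add]
  constructor
  · intro p _
    have hfe : cpGen n (fun g : ↥perm.ker => tauQ n (τ (ξ (g : Braid (n-1))))) p
        = fun g => cpGenM n p (fun k => (fun g : ↥perm.ker => tauQ n (τ (ξ (g : Braid (n-1))))) (g k)) :=
      funext fun g => cpGen_eq n _ p g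
    rw [hfe]
    have H := cocycle_mult (G := ↥perm.ker) (W := Wn n) p (cpGenM n p) (fun g : ↥perm.ker => tauQ n (τ (ξ (g : Braid (n-1))))) ht
    set_option maxHeartbeats 4000000 in exact H
  · intro l _ _
    have hfe : cList n (fun g : ↥perm.ker => tauQ n (τ (ξ (g : Braid (n-1))))) l
        = fun g => cListM n l (fun i => (fun g : ↥perm.ker => tauQ n (τ (ξ (g : Braid (n-1))))) (g i)) :=
      funext fun g => cList_eq n (fun g : ↥perm.ker => tauQ n (τ (ξ (g : Braid (n-1))))) l g
    rw [hfe]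
    have H := cocycle_mult (G := ↥perm.ker) (W := Wn n) l.sum (cListM n l) (fun g : ↥perm.ker => tauQ n (τ (ξ (g : Braid (n-1))))) ht
    set_option maxHeartbeats 4000000 in exact H
end
end

section
/- For each i with 1 ≤ i ≤ n−1: τ₁(β_i)(X_i) = X_i ⊗ X_{i+1} − X_{i+1} ⊗ X_i, and τ₁(β_i)(X_j) = 0 for every j ≠ i. Equivalently, τ₁(β_i) = l_i ⊗ (X_i ⊗ X_{i+1} − X_{i+1} ⊗ X_i), where l_i is the i-th coordinate functional on H. -/
noncomputable section
open scoped TensorProduct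


lemma Mn_mul_def {n : ℕ} (a b : Mn n) :
    a * b = (a.1 + b.1, a.2 + b.2 + a.1 ⊗ₜ[ℤ] b.1) := rfl

lemma Mn_inv_def {n : ℕ} (a : Mn n) :
    a⁻¹ = (-a.1, -a.2 + a.1 ⊗ₜ[ℤ] a.1) := rfl

lemma Theta_of (n : ℕ) (i : Fin n) : Theta n (FreeGroup.of i) = (Xz n i, 0) :=
  FreeGroup.lift_apply_of

lemma theta2_of (n : ℕ) (i : Fin n) : theta2 n (FreeGroup.of i) = 0 := by
  simp [theta2, Theta_of]

lemma Theta_conj (n : ℕ) (i k : Fin n) :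
    Theta n (FreeGroup.of i * FreeGroup.of k * (FreeGroup.of i)⁻¹) =
      (Xz n k, Xz n i ⊗ₜ[ℤ] Xz n k - Xz n k ⊗ₜ[ℤ] Xz n i) := by
  rw [map_mul, map_mul, map_inv, Theta_of, Theta_of]
  refine Prod.ext ?_ ?_
  · show Xz n i + Xz n k + -(Xz n i) = Xz n k
    abel
  · show (0 : HHz n) + 0 + Xz n i ⊗ₜ[ℤ] Xz n k + (-0 + Xz n i ⊗ₜ[ℤ] Xz n i)
        + (Xz n i + Xz n k) ⊗ₜ[ℤ] (-(Xz n i))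
      = Xz n i ⊗ₜ[ℤ] Xz n k - Xz n k ⊗ₜ[ℤ] Xz n i
    rw [TensorProduct.tmul_neg, TensorProduct.add_tmul]
    abel

lemma Theta_conj' (n : ℕ) (i k : Fin n) :
    Theta n ((FreeGroup.of i)⁻¹ * FreeGroup.of k * FreeGroup.of i) =
      (Xz n k, Xz n k ⊗ₜ[ℤ] Xz n i - Xz n i ⊗ₜ[ℤ] Xz n k) := by
  rw [map_mul, map_mul, map_inv, Theta_of, Theta_of]
  refine Prod.ext ?_ ?_
  · show -(Xz n i) + Xz n k + Xz n i = Xz n k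
    abel
  · show (-0 + Xz n i ⊗ₜ[ℤ] Xz n i) + 0 + (-(Xz n i)) ⊗ₜ[ℤ] Xz n k + 0
        + (-(Xz n i) + Xz n k) ⊗ₜ[ℤ] Xz n i
      = Xz n k ⊗ₜ[ℤ] Xz n i - Xz n i ⊗ₜ[ℤ] Xz n k
    rw [TensorProduct.neg_tmul, TensorProduct.add_tmul, TensorProduct.neg_tmul]
    abel

lemma inv_apply_of_eq {n : ℕ} (φ : MulAut (FreeGroup (Fin n)))
    {x y : FreeGroup (Fin n)} (h : φ y = x) : φ⁻¹ x = y := by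
  subst h
  exact φ.symm_apply_apply y

theorem stmt7 (n : ℕ) (hn : 2 ≤ n)
    (β : Fin (n-1) → MulAut (FreeGroup (Fin n)))
    (hβ : ∀ (i : Fin (n-1)) (h1 : (i : ℕ) < n) (h2 : (i : ℕ) + 1 < n),
      β i (FreeGroup.of ⟨i, h1⟩) = FreeGroup.of ⟨(i : ℕ) + 1, h2⟩ ∧
      β i (FreeGroup.of ⟨(i : ℕ) + 1, h2⟩) =
        (FreeGroup.of (⟨(i : ℕ) + 1, h2⟩ : Fin n))⁻¹ * FreeGroup.of ⟨i, h1⟩ *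
          FreeGroup.of ⟨(i : ℕ) + 1, h2⟩ ∧
      ∀ j : Fin n, (j : ℕ) ≠ (i : ℕ) → (j : ℕ) ≠ (i : ℕ) + 1 →
        β i (FreeGroup.of j) = FreeGroup.of j)
    (Φ : MulAut (FreeGroup (Fin n)) → (Hz n →+ Hz n))
    (hΦ : ∀ (φ : MulAut (FreeGroup (Fin n))) (γ : FreeGroup (Fin n)),
      Φ φ (aMap n γ) = aMap n (φ γ))
    (τ : MulAut (FreeGroup (Fin n)) → (Hz n →+ HHz n))
    (hτ : ∀ (φ : MulAut (FreeGroup (Fin n))) (γ : FreeGroup (Fin n)),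
      τ φ (aMap n γ) = theta2 n γ -
        (TensorProduct.map (Φ φ).toIntLinearMap (Φ φ).toIntLinearMap)
          (theta2 n (φ⁻¹ γ)))
 :
    ∀ (i : Fin (n-1)) (h1 : (i : ℕ) < n) (h2 : (i : ℕ) + 1 < n),
      τ (β i) (Xz n ⟨i, h1⟩) =
        Xz n ⟨i, h1⟩ ⊗ₜ[ℤ] Xz n ⟨(i : ℕ) + 1, h2⟩ -
          Xz n ⟨(i : ℕ) + 1, h2⟩ ⊗ₜ[ℤ] Xz n ⟨i, h1⟩ ∧
      ∀ j : Fin n, j ≠ ⟨i, h1⟩ → τ (β i) (Xz n j) = 0 := by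
  intro i h1 h2
  obtain ⟨hβ1, hβ2, hβ3⟩ := hβ i h1 h2
  set xi : Fin n := ⟨i, h1⟩
  set xi1 : Fin n := ⟨(i : ℕ) + 1, h2⟩
  -- Φ on basis vectors
  have hΦi : Φ (β i) (Xz n xi) = Xz n xi1 := by
    have := hΦ (β i) (FreeGroup.of xi)
    rwa [aMap_of, hβ1, aMap_of] at this
  have hΦi1 : Φ (β i) (Xz n xi1) = Xz n xi := by
    have := hΦ (β i) (FreeGroup.of xi1)
    rw [aMap_of, hβ2] at this
    rw [this]
    show (Theta n _).1 = _
    rw [Theta_conj']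
  -- inverse values
  have hinv_i : (β i)⁻¹ (FreeGroup.of xi) =
      FreeGroup.of xi * FreeGroup.of xi1 * (FreeGroup.of xi)⁻¹ := by
    apply inv_apply_of_eq
    rw [map_mul, map_mul, map_inv, hβ1, hβ2]
    group
  have hinv_i1 : (β i)⁻¹ (FreeGroup.of xi1) = FreeGroup.of xi :=
    inv_apply_of_eq _ hβ1
  constructor
  · have := hτ (β i) (FreeGroup.of xi)
    rw [aMap_of, theta2_of, hinv_i] at this
    rw [this]
    have h2eq : theta2 n (FreeGroup.of xi * FreeGroup.of xi1 * (FreeGroup.of xi)⁻¹)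
        = Xz n xi ⊗ₜ[ℤ] Xz n xi1 - Xz n xi1 ⊗ₜ[ℤ] Xz n xi := by
      show (Theta n _).2 = _
      rw [Theta_conj]
    rw [h2eq, map_sub, TensorProduct.map_tmul, TensorProduct.map_tmul]
    show _ - ((Φ (β i)) _ ⊗ₜ[ℤ] (Φ (β i)) _ - (Φ (β i)) _ ⊗ₜ[ℤ] (Φ (β i)) _) = _
    rw [hΦi, hΦi1]
    abel
  · intro j hj
    by_cases hji1 : j = xi1
    · subst hji1
      have := hτ (β i) (FreeGroup.of xi1)
      rw [aMap_of, theta2_of, hinv_i1, theta2_of, map_zero] at this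
      exact this.trans (sub_zero 0)
    · have hj' : (j : ℕ) ≠ (i : ℕ) := fun h => hj (Fin.ext h)
      have hj1' : (j : ℕ) ≠ (i : ℕ) + 1 := fun h => hji1 (Fin.ext h)
      have hfix := hβ3 j hj' hj1'
      have hinv_j : (β i)⁻¹ (FreeGroup.of j) = FreeGroup.of j :=
        inv_apply_of_eq _ hfix
      have := hτ (β i) (FreeGroup.of j)
      rw [aMap_of, theta2_of, hinv_j, theta2_of, map_zero] at this
      exact this.trans (sub_zero 0)
end
end

section
/- For every φ ∈ Aut(F_n), the map F_n → H ⊗_ℤ H given by γ ↦ θ₂(γ) − (|φ| ⊗ |φ|)(θ₂(φ⁻¹(γ))) is a group homomorphism into the additive group H ⊗_ℤ H (i.e., it is additive on products of group elements); consequently it factors uniquely through the abelianization map a : F_n → H, yielding a well-defined additive map τ₁(φ) : H → H ⊗_ℤ H with τ₁(φ)(a(γ)) = θ₂(γ) − (|φ| ⊗ |φ|)(θ₂(φ⁻¹(γ))) for all γ ∈ F_n. -/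
noncomputable section
open scoped TensorProduct


/-- `γ ↦ θ₂(γ) − (|φ| ⊗ |φ|)(θ₂(φ⁻¹(γ)))`. -/
def tdiff (n : ℕ) (Φ : MulAut (FreeGroup (Fin n)) → (Hz n →+ Hz n))
    (φ : MulAut (FreeGroup (Fin n))) (γ : FreeGroup (Fin n)) : HHz n :=
  theta2 n γ -
    (TensorProduct.map (Φ φ).toIntLinearMap (Φ φ).toIntLinearMap)
      (theta2 n (φ⁻¹ γ))

lemma theta2_mul (n : ℕ) (γ δ : FreeGroup (Fin n)) :
    theta2 n (γ * δ) = theta2 n γ + theta2 n δ + aMap n γ ⊗ₜ[ℤ] aMap n δ := by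
  unfold theta2 aMap; rw [map_mul]; rfl

lemma tdiff_mul (n : ℕ)
    (Φ : MulAut (FreeGroup (Fin n)) → (Hz n →+ Hz n))
    (hΦ : ∀ (φ : MulAut (FreeGroup (Fin n))) (γ : FreeGroup (Fin n)),
      Φ φ (aMap n γ) = aMap n (φ γ))
    (φ : MulAut (FreeGroup (Fin n))) (γ δ : FreeGroup (Fin n)) :
    tdiff n Φ φ (γ * δ) = tdiff n Φ φ γ + tdiff n Φ φ δ := by
  unfold tdiff
  have hinv : φ⁻¹ (γ * δ) = φ⁻¹ γ * φ⁻¹ δ := map_mul _ _ _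
  rw [hinv, theta2_mul, theta2_mul, map_add, map_add, TensorProduct.map_tmul]
  have h1 : (Φ φ).toIntLinearMap (aMap n (φ⁻¹ γ)) = aMap n γ := by
    simp only [AddMonoidHom.coe_toIntLinearMap, hΦ]
    congr 1
    exact φ.apply_symm_apply γ
  have h2 : (Φ φ).toIntLinearMap (aMap n (φ⁻¹ δ)) = aMap n δ := by
    simp only [AddMonoidHom.coe_toIntLinearMap, hΦ]
    congr 1
    exact φ.apply_symm_apply δ
  rw [h1, h2]
  abel

theorem stmt12 (n : ℕ) (hn : 2 ≤ n)
    (Φ : MulAut (FreeGroup (Fin n)) → (Hz n →+ Hz n))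
    (hΦ : ∀ (φ : MulAut (FreeGroup (Fin n))) (γ : FreeGroup (Fin n)),
      Φ φ (aMap n γ) = aMap n (φ γ))
    (φ : MulAut (FreeGroup (Fin n))) :
    (∀ γ δ : FreeGroup (Fin n),
      tdiff n Φ φ (γ * δ) = tdiff n Φ φ γ + tdiff n Φ φ δ) ∧
    (∃! τ : Hz n →+ HHz n, ∀ γ : FreeGroup (Fin n), τ (aMap n γ) = tdiff n Φ φ γ) := by
  refine ⟨tdiff_mul n Φ hΦ φ, ?_⟩
  -- candidate additive map
  set τ : Hz n →+ HHz n :=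
    Finsupp.liftAddHom (fun i => zmultiplesHom _ (tdiff n Φ φ (FreeGroup.of i))) with hτ
  have hτ_single : ∀ (i : Fin n) (k : ℤ),
      τ (Finsupp.single i k) = k • tdiff n Φ φ (FreeGroup.of i) := by
    intro i k
    rw [hτ, Finsupp.liftAddHom_apply_single]
    rfl
  -- monoid homs
  have hdiffhom : ∀ γ δ, tdiff n Φ φ (γ * δ) = tdiff n Φ φ γ + tdiff n Φ φ δ :=
    tdiff_mul n Φ hΦ φ
  have key : ∀ γ, τ (aMap n γ) = tdiff n Φ φ γ := by
    intro γ
    let f : FreeGroup (Fin n) →* Multiplicative (HHz n) :=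
      MonoidHom.mk' (fun γ => Multiplicative.ofAdd (τ (aMap n γ)))
        (by intro γ δ; simp [aMap_mul, map_add])
    let g : FreeGroup (Fin n) →* Multiplicative (HHz n) :=
      MonoidHom.mk' (fun γ => Multiplicative.ofAdd (tdiff n Φ φ γ))
        (by intro γ δ; simp [hdiffhom])
    have : f = g := by
      apply FreeGroup.ext_hom
      intro i
      show Multiplicative.ofAdd (τ (aMap n (FreeGroup.of i)))
          = Multiplicative.ofAdd (tdiff n Φ φ (FreeGroup.of i))
      rw [aMap_of]
      congr 1
      simpa [Xz] using hτ_single i 1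
    have := congrArg (fun h => h γ) this
    simpa [f, g] using this
  refine ⟨τ, key, ?_⟩
  intro τ' hτ'
  ext i
  have h1 : τ' (Finsupp.single i 1) = tdiff n Φ φ (FreeGroup.of i) := by
    have := hτ' (FreeGroup.of i)
    rwa [aMap_of] at this
  have h2 : τ (Finsupp.single i 1) = tdiff n Φ φ (FreeGroup.of i) := by
    simpa using hτ_single i 1
  simp [h1, h2]
end
end

section
/- The abelianization of the pure braid group P_n is free abelian of rank n(n−1)/2 with basis the classes of the elements A_{i,j}: the group homomorphism from the free abelian group on the set {(i,j) : 1 ≤ i < j ≤ n} to the abelianization of P_n sending the basis element (i,j) to the class of A_{i,j} is an isomorphism. -/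
noncomputable section
open scoped TensorProduct


namespace BraidPf

variable {m : ℕ}

lemma rel_holds {r : FreeGroup (Fin m)} (hr : r ∈ braidRels m) :
    PresentedGroup.mk (braidRels m) r = 1 :=
  (QuotientGroup.eq_one_iff r).2 (Subgroup.subset_normalClosure hr)

lemma sg_comm {k l : ℕ} (h : k + 2 ≤ l) : Commute (sg m k) (sg m l) := by
  unfold sg
  split_ifs with hk hl hl
  · have hklt : k < m := hk
    have hr : (FreeGroup.of (⟨k, hklt⟩ : Fin m) * .of ⟨l, hl⟩ * (FreeGroup.of (⟨k, hklt⟩ : Fin m))⁻¹ *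
        (FreeGroup.of (⟨l, hl⟩ : Fin m))⁻¹) ∈ braidRels m := Or.inl ⟨⟨k, hklt⟩, ⟨l, hl⟩, h, rfl⟩
    have := rel_holds hr
    simp only [map_mul, map_inv] at this
    have h2 : sigma (⟨k, hklt⟩ : Fin m) * sigma ⟨l, hl⟩ * (sigma ⟨k, hklt⟩)⁻¹ * (sigma ⟨l, hl⟩)⁻¹ = 1 := this
    have h3 := congrArg (fun x => x * (sigma (⟨l, hl⟩ : Fin m) * sigma ⟨k, hklt⟩)) h2
    show _ * _ = _ * _
    simpa [mul_assoc] using h3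
  · exact Commute.one_right _
  · exact Commute.one_left _
  · exact Commute.one_right _

lemma sg_braid {k : ℕ} (h : k + 2 ≤ m) :
    sg m k * sg m (k+1) * sg m k = sg m (k+1) * sg m k * sg m (k+1) := by
  have hk : k < m := by omega
  have hk1 : k + 1 < m := by omega
  have hr : (FreeGroup.of (⟨k, hk⟩ : Fin m) * .of ⟨k+1, hk1⟩ * .of ⟨k, hk⟩ *
      (FreeGroup.of (⟨k+1, hk1⟩ : Fin m) * .of ⟨k, hk⟩ * .of ⟨k+1, hk1⟩)⁻¹) ∈ braidRels m :=
    Or.inr ⟨⟨k, hk⟩, ⟨k+1, hk1⟩, rfl, rfl⟩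
  have h2 := rel_holds hr
  simp only [map_mul, map_inv] at h2
  rw [mul_inv_eq_one] at h2
  simp only [sg, hk, hk1, dif_pos]
  exact h2

section GroupHelpers
variable {G : Type*} [Group G] {a b c : G}

lemma br_h2 (h : a*b*a = b*a*b) : b*a*b⁻¹ = a⁻¹*b*a := by
  have := congrArg (fun x => a⁻¹ * x * b⁻¹) h
  simpa [mul_assoc] using this

lemma br_conj_sq (h : a*b*a = b*a*b) : a * (b * (a*a) * b⁻¹) * a⁻¹ = b * b := by
  calc a * (b*(a*a)*b⁻¹) * a⁻¹ = (a*b*a)*(a*(b⁻¹*a⁻¹)) := by group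
    _ = (b*a*b)*(a*(b⁻¹*a⁻¹)) := by rw [h]
    _ = b*(a*b*a)*(b⁻¹*a⁻¹) := by group
    _ = b*(b*a*b)*(b⁻¹*a⁻¹) := by rw [h]
    _ = b*b := by group

lemma br_comm_conj (h : a*b*a = b*a*b) (hc : Commute b c) :
    Commute a (b*a*c*a⁻¹*b⁻¹) := by
  have h' : b*a⁻¹*b⁻¹ = a⁻¹*b⁻¹*a := by
    have := congrArg (fun x : G => x⁻¹) (br_h2 h)
    simpa [mul_assoc] using this
  show a * (b*a*c*a⁻¹*b⁻¹) = (b*a*c*a⁻¹*b⁻¹) * a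
  calc a*(b*a*c*a⁻¹*b⁻¹) = (a*b*a)*(c*(a⁻¹*b⁻¹)) := by group
    _ = (b*a*b)*(c*(a⁻¹*b⁻¹)) := by rw [h]
    _ = (b*a)*(b*c)*(a⁻¹*b⁻¹) := by group
    _ = (b*a)*(c*b)*(a⁻¹*b⁻¹) := by rw [hc.eq]
    _ = (b*a*c)*(b*a⁻¹*b⁻¹) := by group
    _ = (b*a*c)*(a⁻¹*b⁻¹*a) := by rw [h']
    _ = (b*a*c*a⁻¹*b⁻¹)*a := by group

end GroupHelpers

lemma Ael_succ (i j : ℕ) : Ael m i (j+1) =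
    if j = i then sg m i * sg m i else sg m j * Ael m i j * (sg m j)⁻¹ := rfl

lemma Ael_eq_one {i j : ℕ} (h : j ≤ i) : Ael m i j = 1 := by
  induction j with
  | zero => rfl
  | succ j ih =>
    rw [Ael_succ, if_neg (by omega)]
    rw [ih (by omega)]
    group

lemma comm_high {l i j : ℕ} (h : j < l) : Commute (sg m l) (Ael m i j) := by
  induction j with
  | zero => exact Commute.one_right _
  | succ j ih =>
    rw [Ael_succ]
    split_ifs with hj
    · subst hj
      exact ((sg_comm (by omega)).symm.mul_right (sg_comm (by omega)).symm)
    · exact ((sg_comm (by omega)).symm.mul_right (ih (by omega))).mul_right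
        ((sg_comm (by omega)).symm.inv_right)

lemma comm_low {k i j : ℕ} (h : k + 2 ≤ i) : Commute (sg m k) (Ael m i j) := by
  induction j with
  | zero => exact Commute.one_right _
  | succ j ih =>
    rw [Ael_succ]
    split_ifs with hj
    · exact ((sg_comm h).mul_right (sg_comm h))
    · rcases lt_or_ge j i with hji | hji
      · rw [Ael_eq_one (le_of_lt hji)]
        have : sg m j * 1 * (sg m j)⁻¹ = 1 := by group
        rw [this]
        exact Commute.one_right _
      · have hj2 : k + 2 ≤ j := by omega
        exact ((sg_comm hj2).mul_right ih).mul_right (sg_comm hj2).inv_right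

lemma comm_mid {k i j : ℕ} (h1 : i < k) (h2 : k + 2 ≤ j) (h3 : j ≤ m) :
    Commute (sg m k) (Ael m i j) := by
  induction j with
  | zero => exact Commute.one_right _
  | succ j ih =>
    rcases Nat.lt_or_ge (k+2) (j+1) with hlt | hge
    · -- j ≥ k+2, step case
      rw [Ael_succ, if_neg (by omega)]
      exact ((sg_comm (by omega)).mul_right (ih (by omega) (by omega))).mul_right
        (sg_comm (by omega)).inv_right
    · -- base: j+1 = k+2, i.e. j = k+1
      have hj : j = k + 1 := by omega
      subst hj
      rw [Ael_succ, if_neg (by omega), Ael_succ, if_neg (by omega)]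
      have hb : sg m k * sg m (k+1) * sg m k = sg m (k+1) * sg m k * sg m (k+1) :=
        sg_braid (by omega)
      have hc : Commute (sg m (k+1)) (Ael m i k) := comm_high (by omega)
      have := br_comm_conj hb hc
      convert this using 2 <;> group

lemma key1 {i j : ℕ} (h1 : i + 1 < j) (h2 : j ≤ m) :
    sg m i * Ael m i j * (sg m i)⁻¹ = Ael m (i+1) j := by
  induction j with
  | zero => omega
  | succ j ih =>
    rcases Nat.lt_or_ge (i+1) j with hlt | hge
    · -- step: j ≥ i+2
      rw [Ael_succ, if_neg (by omega), Ael_succ, if_neg (by omega)]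
      rw [← ih hlt (by omega)]
      have hc : Commute (sg m i) (sg m j) := sg_comm (by omega)
      calc sg m i * (sg m j * Ael m i j * (sg m j)⁻¹) * (sg m i)⁻¹
          = (sg m i * sg m j) * Ael m i j * ((sg m j)⁻¹ * (sg m i)⁻¹) := by group
        _ = (sg m j * sg m i) * Ael m i j * ((sg m j)⁻¹ * (sg m i)⁻¹) := by rw [hc.eq]
        _ = sg m j * (sg m i * Ael m i j * ((sg m j)⁻¹ * (sg m i)⁻¹)) := by group
        _ = sg m j * (sg m i * Ael m i j * ((sg m i)⁻¹ * (sg m j)⁻¹)) := by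
              rw [hc.inv_inv.eq]
        _ = sg m j * (sg m i * Ael m i j * (sg m i)⁻¹) * (sg m j)⁻¹ := by group
    · -- base: j = i+1
      have hj : j = i + 1 := by omega
      subst hj
      rw [Ael_succ, if_neg (by omega), Ael_succ, if_pos rfl, Ael_succ, if_pos rfl]
      have hb : sg m i * sg m (i+1) * sg m i = sg m (i+1) * sg m i * sg m (i+1) :=
        sg_braid (by omega)
      have := br_conj_sq hb
      convert this using 2 <;> group

def AS (m : ℕ) : Set (Braid m) := {g | ∃ i j : ℕ, i < j ∧ j ≤ m ∧ g = Ael m i j}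

def NA (m : ℕ) : Subgroup (Braid m) := Subgroup.closure (AS m)

lemma mem_NA {i j : ℕ} (h : i < j) (hm : j ≤ m) : Ael m i j ∈ NA m :=
  Subgroup.subset_closure ⟨i, j, h, hm, rfl⟩

lemma sq_eq (k : ℕ) : sg m k * sg m k = Ael m k (k+1) := by
  rw [Ael_succ, if_pos rfl]

lemma sq_mem {k : ℕ} (hk : k < m) : sg m k * sg m k ∈ NA m := by
  rw [sq_eq]; exact mem_NA (Nat.lt_succ_self k) hk

lemma conj_mem_NA {x a : Braid m} (hx : x ∈ NA m) (ha : a ∈ NA m) :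
    x * a * x⁻¹ ∈ NA m := mul_mem (mul_mem hx ha) (inv_mem hx)

lemma commute_conj {s a : Braid m} (hc : Commute s a) :
    s * a * s⁻¹ = a ∧ s⁻¹ * a * s = a := by
  constructor
  · rw [hc.eq]; group
  · rw [hc.inv_left.eq]; group

lemma sigma_eq_sg (i : Fin m) : sigma i = sg m (i : ℕ) := by
  simp [sg, i.isLt]

lemma conj_cases {k : ℕ} (hk : k < m) {i j : ℕ} (hij : i < j) (hjm : j ≤ m) :
    sg m k * Ael m i j * (sg m k)⁻¹ ∈ NA m ∧ (sg m k)⁻¹ * Ael m i j * sg m k ∈ NA m := by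
  have hA : Ael m i j ∈ NA m := mem_NA hij hjm
  by_cases hlow : k + 2 ≤ i
  · have hc := commute_conj (comm_low (m := m) (j := j) hlow)
    rw [hc.1, hc.2]; exact ⟨hA, hA⟩
  · by_cases hhigh : j < k
    · have hc := commute_conj (comm_high (m := m) (i := i) hhigh)
      rw [hc.1, hc.2]; exact ⟨hA, hA⟩
    · by_cases hmid : i < k ∧ k + 2 ≤ j
      · have hc := commute_conj (comm_mid (m := m) hmid.1 hmid.2 hjm)
        rw [hc.1, hc.2]; exact ⟨hA, hA⟩
      · have hcase : k + 1 = i ∨ k = i ∨ (i < k ∧ k + 1 = j) ∨ k = j := by omega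
        rcases hcase with h1 | h1 | ⟨h1, h2⟩ | h1
        · -- k+1 = i
          subst h1
          have hkey := key1 (i := k) (j := j) (by omega) hjm
          constructor
          · have e : sg m k * Ael m (k+1) j * (sg m k)⁻¹
                = (sg m k * sg m k) * Ael m k j * ((sg m k * sg m k))⁻¹ := by
              rw [← hkey]; group
            rw [e]; exact conj_mem_NA (sq_mem hk) (mem_NA (by omega) hjm)
          · have e : (sg m k)⁻¹ * Ael m (k+1) j * sg m k = Ael m k j := by
              rw [← hkey]; group
            rw [e]; exact mem_NA (by omega) hjm
        · -- k = i
          subst h1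
          by_cases hj1 : j = k + 1
          · subst hj1
            have hc : Commute (sg m k) (Ael m k (k+1)) := by
              rw [← sq_eq]
              exact (Commute.refl _).mul_right (Commute.refl _)
            have h2 := commute_conj hc
            rw [h2.1, h2.2]; exact ⟨hA, hA⟩
          · have hkey := key1 (i := k) (j := j) (by omega) hjm
            constructor
            · rw [hkey]; exact mem_NA (by omega) hjm
            · have e : (sg m k)⁻¹ * Ael m k j * sg m k
                  = (sg m k * sg m k)⁻¹ * Ael m (k+1) j * (sg m k * sg m k) := by
                rw [← hkey]; group
              rw [e]
              exact mul_mem (mul_mem (inv_mem (sq_mem hk)) (mem_NA (by omega) hjm)) (sq_mem hk)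
        · -- i < k, k+1 = j
          subst h2
          have e0 : Ael m i (k+1) = sg m k * Ael m i k * (sg m k)⁻¹ := by
            rw [Ael_succ, if_neg (by omega)]
          constructor
          · have e : sg m k * Ael m i (k+1) * (sg m k)⁻¹
                = (sg m k * sg m k) * Ael m i k * ((sg m k * sg m k))⁻¹ := by
              rw [e0]; group
            rw [e]; exact conj_mem_NA (sq_mem hk) (mem_NA (by omega) (by omega))
          · have e : (sg m k)⁻¹ * Ael m i (k+1) * sg m k = Ael m i k := by
              rw [e0]; group
            rw [e]; exact mem_NA (by omega) (by omega)
        · -- k = j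
          subst h1
          have e0 : Ael m i (k+1) = sg m k * Ael m i k * (sg m k)⁻¹ := by
            rw [Ael_succ, if_neg (by omega)]
          constructor
          · rw [← e0]; exact mem_NA (by omega) (by omega)
          · have e : (sg m k)⁻¹ * Ael m i k * sg m k
                = (sg m k * sg m k)⁻¹ * Ael m i (k+1) * (sg m k * sg m k) := by
              rw [e0]; group
            rw [e]
            exact mul_mem (mul_mem (inv_mem (sq_mem hk)) (mem_NA (by omega) (by omega)))
              (sq_mem hk)

lemma sg_conj_NA {k : ℕ} {a : Braid m} (ha : a ∈ NA m) :
    sg m k * a * (sg m k)⁻¹ ∈ NA m ∧ (sg m k)⁻¹ * a * sg m k ∈ NA m := by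
  by_cases hk : k < m
  · refine Subgroup.closure_induction
      (p := fun a _ => sg m k * a * (sg m k)⁻¹ ∈ NA m ∧ (sg m k)⁻¹ * a * sg m k ∈ NA m)
      ?_ ?_ ?_ ?_ ha
    · rintro x ⟨i, j, hij, hjm, rfl⟩
      exact conj_cases hk hij hjm
    · constructor <;> simpa using one_mem (NA m)
    · rintro x y _ _ ⟨hx1, hx2⟩ ⟨hy1, hy2⟩
      constructor
      · have e : sg m k * (x*y) * (sg m k)⁻¹
            = (sg m k * x * (sg m k)⁻¹) * (sg m k * y * (sg m k)⁻¹) := by group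
        rw [e]; exact mul_mem hx1 hy1
      · have e : (sg m k)⁻¹ * (x*y) * sg m k
            = ((sg m k)⁻¹ * x * sg m k) * ((sg m k)⁻¹ * y * sg m k) := by group
        rw [e]; exact mul_mem hx2 hy2
    · rintro x _ ⟨hx1, hx2⟩
      constructor
      · have e : sg m k * x⁻¹ * (sg m k)⁻¹ = (sg m k * x * (sg m k)⁻¹)⁻¹ := by group
        rw [e]; exact inv_mem hx1
      · have e : (sg m k)⁻¹ * x⁻¹ * sg m k = ((sg m k)⁻¹ * x * sg m k)⁻¹ := by group
        rw [e]; exact inv_mem hx2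
  · have : sg m k = 1 := by simp [sg, hk]
    rw [this]
    constructor <;> · simpa using ha

def Kconj (m : ℕ) : Subgroup (Braid m) where
  carrier := {g | ∀ a ∈ NA m, g * a * g⁻¹ ∈ NA m ∧ g⁻¹ * a * g ∈ NA m}
  one_mem' := by
    intro a ha
    exact ⟨by simpa using ha, by simpa using ha⟩
  mul_mem' := by
    rintro x y hx hy a ha
    constructor
    · have e : (x*y) * a * (x*y)⁻¹ = x * (y * a * y⁻¹) * x⁻¹ := by group
      rw [e]; exact (hx _ ((hy a ha).1)).1
    · have e : (x*y)⁻¹ * a * (x*y) = y⁻¹ * (x⁻¹ * a * x) * y := by group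
      rw [e]; exact (hy _ ((hx a ha).2)).2
  inv_mem' := by
    rintro x hx a ha
    constructor
    · simpa using (hx a ha).2
    · simpa using (hx a ha).1

lemma NA_normal : (NA m).Normal := by
  constructor
  intro a ha g
  have hg : g ∈ Kconj m := by
    refine PresentedGroup.generated_by _ (Kconj m) ?_ g
    intro jj a' ha'
    have : (PresentedGroup.of jj : Braid m) = sg m (jj : ℕ) := sigma_eq_sg jj
    rw [this]
    exact sg_conj_NA ha'
  exact (hg a ha).1

section PermPart

lemma swap_commute {α : Type*} [DecidableEq α] {a b c d : α}
    (h1 : a ≠ c) (h2 : a ≠ d) (h3 : b ≠ c) (h4 : b ≠ d) :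
    Commute (Equiv.swap a b) (Equiv.swap c d) := by
  have e : Equiv.swap a b * Equiv.swap c d * (Equiv.swap a b)⁻¹ = Equiv.swap c d := by
    rw [← Equiv.swap_apply_apply, Equiv.swap_apply_of_ne_of_ne h1.symm h3.symm,
      Equiv.swap_apply_of_ne_of_ne h2.symm h4.symm]
  have := congrArg (fun x => x * Equiv.swap a b) e
  show _ * _ = _ * _
  simpa [mul_assoc] using this

lemma swap_braid {α : Type*} [DecidableEq α] {a b c : α}
    (h1 : a ≠ b) (h2 : b ≠ c) (h3 : a ≠ c) :
    Equiv.swap a b * Equiv.swap b c * Equiv.swap a b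
      = Equiv.swap b c * Equiv.swap a b * Equiv.swap b c := by
  have e1 : Equiv.swap a b * Equiv.swap b c * Equiv.swap a b
      = Equiv.swap a b * Equiv.swap b c * (Equiv.swap a b)⁻¹ := by rw [Equiv.swap_inv]
  have e2 : Equiv.swap b c * Equiv.swap a b * Equiv.swap b c
      = Equiv.swap b c * Equiv.swap a b * (Equiv.swap b c)⁻¹ := by rw [Equiv.swap_inv]
  rw [e1, e2, ← Equiv.swap_apply_apply, ← Equiv.swap_apply_apply]
  have l1 : (Equiv.swap a b) b = a := Equiv.swap_apply_right _ _
  have l2 : (Equiv.swap a b) c = c := Equiv.swap_apply_of_ne_of_ne h3.symm h2.symm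
  have l3 : (Equiv.swap b c) a = a := Equiv.swap_apply_of_ne_of_ne h1 h3
  have l4 : (Equiv.swap b c) b = c := Equiv.swap_apply_left _ _
  rw [l1, l2, l3, l4]

variable (m : ℕ)

/-- The image of generator `k` in the symmetric group on `m+1` strands. -/
def swg (k : Fin m) : Equiv.Perm (Fin (m+1)) :=
  Equiv.swap ⟨k, by omega⟩ ⟨(k : ℕ) + 1, by omega⟩

lemma permB_rels : ∀ r ∈ braidRels m, FreeGroup.lift (swg m) r = 1 := by
  rintro r (⟨i, j, hij, rfl⟩ | ⟨i, j, hij, rfl⟩) <;>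
    simp only [map_mul, map_inv, FreeGroup.lift_apply_of]
  · have hc : Commute (swg m i) (swg m j) := by
      apply swap_commute <;> (apply Fin.ne_of_val_ne; simp; omega)
    rw [mul_inv_eq_one, mul_inv_eq_iff_eq_mul, hc.eq]
  · have hb := swap_braid (α := Fin (m+1)) (a := ⟨i, by omega⟩) (b := ⟨(i:ℕ)+1, by omega⟩)
      (c := ⟨(i:ℕ)+2, by omega⟩) (by apply Fin.ne_of_val_ne; simp)
      (by apply Fin.ne_of_val_ne; simp) (by apply Fin.ne_of_val_ne; simp)
    rw [mul_inv_eq_one]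
    have hj : swg m j = Equiv.swap ⟨(i:ℕ)+1, by omega⟩ ⟨(i:ℕ)+2, by omega⟩ := by
      have : (j : ℕ) = (i : ℕ) + 1 := hij.symm
      simp only [swg, this]
    rw [hj]
    exact hb

/-- The permutation homomorphism from the braid group. -/
def permB : Braid m →* Equiv.Perm (Fin (m+1)) :=
  PresentedGroup.toGroup (permB_rels m)

lemma permB_sigma (i : Fin m) : permB m (sigma i) = swg m i :=
  PresentedGroup.toGroup.of _

lemma permB_sg {k : ℕ} (hk : k < m) :
    permB m (sg m k) = Equiv.swap ⟨k, by omega⟩ ⟨k + 1, by omega⟩ := by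
  rw [sg, dif_pos hk, permB_sigma]
  rfl

lemma permB_sg_high {k : ℕ} (hk : ¬ k < m) : permB m (sg m k) = 1 := by
  rw [sg, dif_neg hk, map_one]

lemma permB_Ael (i : ℕ) : ∀ j, permB m (Ael m i j) = 1 := by
  intro j
  induction j with
  | zero => exact map_one _
  | succ j ih =>
    rw [Ael_succ]
    split_ifs with hj
    · by_cases hi : i < m
      · rw [map_mul, permB_sg (m := m) hi, Equiv.swap_mul_self]
      · rw [map_mul, permB_sg_high (m := m) hi, mul_one]
    · rw [map_mul, map_mul, map_inv, ih]
      group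

lemma NA_le_ker : NA m ≤ (permB m).ker := by
  rw [NA, Subgroup.closure_le]
  rintro x ⟨i, j, hij, hjm, rfl⟩
  exact permB_Ael m i j

end PermPart

section QuotientPart

variable (m : ℕ)

instance NA_normal_inst : (NA m).Normal := NA_normal

/-- The quotient of the braid group by the subgroup generated by the `A_{i,j}`. -/
abbrev Qb := Braid m ⧸ NA m

def qk : Braid m →* Qb m := QuotientGroup.mk' (NA m)

def tq (k : ℕ) : Qb m := qk m (sg m k)

lemma tq_sq (k : ℕ) : tq m k * tq m k = 1 := by
  by_cases hk : k < m
  · rw [tq, ← map_mul]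
    show (QuotientGroup.mk (sg m k * sg m k) : Qb m) = 1
    rw [QuotientGroup.eq_one_iff]
    exact sq_mem hk
  · rw [tq, sg, dif_neg hk]; simp

lemma tq_inv (k : ℕ) : (tq m k)⁻¹ = tq m k :=
  inv_eq_of_mul_eq_one_right (tq_sq m k)

lemma tq_comm {k l : ℕ} (h : k + 2 ≤ l) : Commute (tq m k) (tq m l) :=
  (sg_comm h).map (qk m)

lemma tq_braid {k : ℕ} (h : k + 2 ≤ m) :
    tq m k * tq m (k+1) * tq m k = tq m (k+1) * tq m k * tq m (k+1) := by
  have := congrArg (qk m) (sg_braid (m := m) h)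
  simpa [tq, map_mul] using this

/-- Descending products `t_d t_{d-1} ⋯ t_j` of quotient generators. -/
def Dq (d : ℕ) : ℕ → Qb m
  | j => if _ : j ≤ d then Dq d (j+1) * tq m j else 1
  termination_by j => d + 1 - j

lemma Dq_eq {d j : ℕ} (h : j ≤ d) : Dq m d j = Dq m d (j+1) * tq m j := by
  rw [Dq, dif_pos h]

lemma Dq_stop {d j : ℕ} (h : d < j) : Dq m d j = 1 := by
  rw [Dq, dif_neg (by omega)]

lemma tq_comm_Dq {d j k : ℕ} (h : k + 2 ≤ j) : Commute (tq m k) (Dq m d j) := by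
  by_cases hj : j ≤ d
  · rw [Dq_eq m hj]
    exact (tq_comm_Dq (by omega : k + 2 ≤ j + 1)).mul_right (tq_comm (m := m) h)
  · rw [Dq_stop m (by omega)]
    exact Commute.one_right _
  termination_by d + 1 - j

lemma Dq_mul_self {d j : ℕ} (h : j ≤ d) : Dq m d j * tq m j = Dq m d (j+1) := by
  rw [Dq_eq m h, mul_assoc, tq_sq, mul_one]

/-- The key exchange identity: `D_{d,j} t_{k+1} = t_k D_{d,j}` for `j ≤ k`, `k+1 ≤ d < m`. -/
lemma Dq_exchange {d k : ℕ} (hk : k + 1 ≤ d) (hd : d < m) :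
    ∀ c j, j + c = k → Dq m d j * tq m (k+1) = tq m k * Dq m d j := by
  intro c
  induction c with
  | zero =>
    intro j hj
    have hjk : j = k := by omega
    subst hjk
    -- D d j = D d (j+2) * t (j+1) * t j
    have e1 : Dq m d j = Dq m d (j+2) * tq m (j+1) * tq m j := by
      rw [Dq_eq m (by omega), Dq_eq m (by omega : j + 1 ≤ d)]
    have hbr : tq m j * tq m (j+1) * tq m j = tq m (j+1) * tq m j * tq m (j+1) :=
      tq_braid m (by omega)
    have hcomm : Commute (tq m j) (Dq m d (j+2)) := tq_comm_Dq m (by omega)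
    calc Dq m d j * tq m (j+1)
        = Dq m d (j+2) * (tq m (j+1) * tq m j * tq m (j+1)) := by rw [e1]; group
      _ = Dq m d (j+2) * (tq m j * tq m (j+1) * tq m j) := by rw [← hbr]
      _ = (Dq m d (j+2) * tq m j) * (tq m (j+1) * tq m j) := by group
      _ = (tq m j * Dq m d (j+2)) * (tq m (j+1) * tq m j) := by rw [hcomm.eq]
      _ = tq m j * (Dq m d (j+2) * tq m (j+1) * tq m j) := by group
      _ = tq m j * Dq m d j := by rw [← e1]
  | succ c ih =>
    intro j hj
    have hjd : j ≤ d := by omega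
    have e1 : Dq m d j = Dq m d (j+1) * tq m j := Dq_eq m hjd
    have hc1 : Commute (tq m j) (tq m (k+1)) := tq_comm (m := m) (by omega)
    calc Dq m d j * tq m (k+1) = Dq m d (j+1) * (tq m j * tq m (k+1)) := by rw [e1]; group
      _ = Dq m d (j+1) * (tq m (k+1) * tq m j) := by rw [hc1.eq]
      _ = (Dq m d (j+1) * tq m (k+1)) * tq m j := by group
      _ = (tq m k * Dq m d (j+1)) * tq m j := by rw [ih (j+1) (by omega)]
      _ = tq m k * Dq m d j := by rw [e1]; group

def Hq (d : ℕ) : Subgroup (Qb m) := Subgroup.closure {q | ∃ k < d, q = tq m k}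

lemma Hq_mono {d d' : ℕ} (h : d ≤ d') : Hq m d ≤ Hq m d' :=
  Subgroup.closure_mono (by rintro q ⟨k, hk, rfl⟩; exact ⟨k, by omega, rfl⟩)

/-- Coset decomposition: every element of `Hq (d+1)` left-multiplied into a `Dq`-form. -/
lemma Hq_decomp {d : ℕ} (hd : d < m) {g : Qb m} (hg : g ∈ Hq m (d+1)) :
    ∀ j ≤ d + 1,
      (∃ h ∈ Hq m d, ∃ j' ≤ d + 1, Dq m d j * g = h * Dq m d j') ∧
      (∃ h ∈ Hq m d, ∃ j' ≤ d + 1, Dq m d j * g⁻¹ = h * Dq m d j') := by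
  refine Subgroup.closure_induction
    (p := fun g _ => ∀ j ≤ d + 1,
      ((∃ h ∈ Hq m d, ∃ j' ≤ d + 1, Dq m d j * g = h * Dq m d j') ∧
       (∃ h ∈ Hq m d, ∃ j' ≤ d + 1, Dq m d j * g⁻¹ = h * Dq m d j'))) ?_ ?_ ?_ ?_ hg
  · rintro x ⟨k, hk, rfl⟩ j hj
    have key : ∃ h ∈ Hq m d, ∃ j' ≤ d + 1, Dq m d j * tq m k = h * Dq m d j' := by
      rcases Nat.lt_or_ge (k+2) j with h1 | h1
      · -- k + 2 ≤ j : commute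
        refine ⟨tq m k, Subgroup.subset_closure ⟨k, by omega, rfl⟩, j, hj, ?_⟩
        rw [(tq_comm_Dq m (by omega)).eq]
      · rcases Nat.lt_or_ge k j with h2 | h2
        · rcases Nat.lt_or_ge (k+1) j with h3 | h3
          · -- k + 2 = j
            refine ⟨tq m k, Subgroup.subset_closure ⟨k, by omega, rfl⟩, j, hj, ?_⟩
            rw [(tq_comm_Dq m (by omega)).eq]
          · -- k + 1 = j
            have hkj : j = k + 1 := by omega
            subst hkj
            exact ⟨1, one_mem _, k, by omega, by rw [one_mul, ← Dq_eq m (by omega)]⟩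
        · rcases Nat.lt_or_ge j k with h3 | h3
          · -- j < k : exchange, k = (k-1)+1
            obtain ⟨k', rfl⟩ : ∃ k', k = k' + 1 := ⟨k - 1, by omega⟩
            refine ⟨tq m k', Subgroup.subset_closure ⟨k', by omega, rfl⟩, j, hj, ?_⟩
            exact Dq_exchange m (by omega) hd (k' - j) j (by omega)
          · -- j = k
            have : j = k := by omega
            subst this
            exact ⟨1, one_mem _, j + 1, by omega, by rw [one_mul, Dq_mul_self m (by omega)]⟩
    exact ⟨key, by rw [tq_inv]; exact key⟩
  · intro j hj
    constructor <;> exact ⟨1, one_mem _, j, hj, by simp⟩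
  · rintro x y _ _ hx hy
    intro j hj
    constructor
    · obtain ⟨h1, hh1, j1, hj1, e1⟩ := (hx j hj).1
      obtain ⟨h2, hh2, j2, hj2, e2⟩ := (hy j1 hj1).1
      refine ⟨h1 * h2, mul_mem hh1 hh2, j2, hj2, ?_⟩
      calc Dq m d j * (x * y) = (Dq m d j * x) * y := by group
        _ = h1 * (Dq m d j1 * y) := by rw [e1]; group
        _ = h1 * (h2 * Dq m d j2) := by rw [e2]
        _ = h1 * h2 * Dq m d j2 := by group
    · obtain ⟨h1, hh1, j1, hj1, e1⟩ := (hy j hj).2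
      obtain ⟨h2, hh2, j2, hj2, e2⟩ := (hx j1 hj1).2
      refine ⟨h1 * h2, mul_mem hh1 hh2, j2, hj2, ?_⟩
      calc Dq m d j * (x * y)⁻¹ = (Dq m d j * y⁻¹) * x⁻¹ := by group
        _ = h1 * (Dq m d j1 * x⁻¹) := by rw [e1]; group
        _ = h1 * (h2 * Dq m d j2) := by rw [e2]
        _ = h1 * h2 * Dq m d j2 := by group
  · rintro x _ hx j hj
    exact ⟨(hx j hj).2, by simpa using (hx j hj).1⟩

end QuotientPart

section InjPart

variable (m : ℕ)

def permQ : Qb m →* Equiv.Perm (Fin (m+1)) :=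
  QuotientGroup.lift (NA m) (permB m) (fun x hx => (NA_le_ker m) hx)

lemma permQ_qk (g : Braid m) : permQ m (qk m g) = permB m g := rfl

lemma permQ_tq {k : ℕ} (hk : k < m) :
    permQ m (tq m k) = Equiv.swap ⟨k, by omega⟩ ⟨k + 1, by omega⟩ := by
  rw [tq, permQ_qk, permB_sg (m := m) hk]

lemma permQ_Dq {d : ℕ} (hd : d < m) :
    ∀ j (_ : j ≤ d + 1), permQ m (Dq m d j) ⟨j, by omega⟩ = ⟨d + 1, by omega⟩ := by
  intro j hj
  by_cases h : j ≤ d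
  · rw [Dq_eq m h, map_mul, Equiv.Perm.mul_apply, permQ_tq m (by omega),
      Equiv.swap_apply_left]
    exact permQ_Dq hd (j+1) (by omega)
  · have : j = d + 1 := by omega
    subst this
    rw [Dq_stop m (by omega), map_one, Equiv.Perm.one_apply]
  termination_by j => d + 1 - j

lemma Hq_fixes {d : ℕ} {h : Qb m} (hh : h ∈ Hq m d) :
    ∀ x : Fin (m+1), d < (x:ℕ) → permQ m h x = x := by
  refine Subgroup.closure_induction
    (p := fun h _ => ∀ x : Fin (m+1), d < (x:ℕ) → permQ m h x = x)
    ?_ ?_ ?_ ?_ hh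
  · rintro q ⟨k, hk, rfl⟩ x hx
    by_cases hkm : k < m
    · rw [permQ_tq m hkm]
      apply Equiv.swap_apply_of_ne_of_ne <;>
        (apply Fin.ne_of_val_ne; simp only [Fin.val_mk]; omega)
    · rw [tq, sg, dif_neg hkm]
      simp
  · intro x _
    simp
  · intro a b _ _ ha hb x h1
    rw [map_mul, Equiv.Perm.mul_apply, hb x h1, ha x h1]
  · intro a _ ha x h1
    rw [map_inv]
    have := ha x h1
    conv_lhs => rw [← this]
    simp

lemma permQ_inj_aux : ∀ d, d ≤ m → ∀ g ∈ Hq m d, permQ m g = 1 → g = 1 := by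
  intro d
  induction d with
  | zero =>
    intro _ g hg _
    have : Hq m 0 = ⊥ := by
      have he : ({q | ∃ k < 0, q = tq m k} : Set (Qb m)) = ∅ := by
        ext q; simp
      rw [Hq, he, Subgroup.closure_empty]
    rw [this] at hg
    simpa using hg
  | succ d ih =>
    intro hdm g hg hperm1
    have hd : d < m := by omega
    obtain ⟨h, hh, j', hj', e⟩ := ((Hq_decomp m hd hg) (d+1) (le_refl _)).1
    rw [Dq_stop m (by omega), one_mul] at e
    -- evaluate at j'
    have ev : permQ m g ⟨j', by omega⟩ = ⟨j', by omega⟩ := by rw [hperm1]; rfl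
    have ev2 : permQ m g ⟨j', by omega⟩ = ⟨d+1, by omega⟩ := by
      rw [e, map_mul, Equiv.Perm.mul_apply, permQ_Dq m hd j' hj',
        Hq_fixes m hh _ (by simp)]
    have : j' = d + 1 := by
      have := ev.symm.trans ev2
      simpa [Fin.ext_iff] using this
    subst this
    rw [Dq_stop m (by omega), mul_one] at e
    subst e
    exact ih (by omega) g hh hperm1

lemma Hq_top : ∀ q : Qb m, q ∈ Hq m m := by
  intro q
  obtain ⟨g, rfl⟩ := QuotientGroup.mk'_surjective (NA m) q
  refine PresentedGroup.generated_by _ ((Hq m m).comap (qk m)) ?_ g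
  intro j
  have : (qk m) (PresentedGroup.of j) = tq m (j : ℕ) := by
    rw [tq]
    congr 1
    exact sigma_eq_sg j
  simp only [Subgroup.mem_comap]
  rw [this]
  exact Subgroup.subset_closure ⟨(j : ℕ), j.isLt, rfl⟩

lemma ker_permB_eq : (permB m).ker = NA m := by
  apply le_antisymm
  · intro g hg
    have h1 : permQ m (qk m g) = 1 := hg
    have h2 : qk m g = 1 := permQ_inj_aux m m (le_refl m) _ (Hq_top m _) h1
    exact (QuotientGroup.eq_one_iff g).mp h2
  · exact NA_le_ker m

end InjPart

section CocyclePart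

variable (m : ℕ)

/-- The index type of pairs `i < j` of strands. -/
abbrev XP := {p : Fin (m+1) × Fin (m+1) // p.1 < p.2}

variable {m}

/-- The sorted action of a permutation on pairs. -/
def pmap (π : Equiv.Perm (Fin (m+1))) (p : XP m) : XP m :=
  if h : π p.1.1 < π p.1.2 then ⟨(π p.1.1, π p.1.2), h⟩
  else ⟨(π p.1.2, π p.1.1), by
    rcases lt_or_eq_of_le (not_lt.1 h) with h' | h'
    · exact h'
    · exact absurd (π.injective h') (ne_of_gt p.2)⟩

lemma pmap_mul (π τ : Equiv.Perm (Fin (m+1))) (p : XP m) :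
    pmap (π * τ) p = pmap π (pmap τ p) := by
  obtain ⟨⟨a, b⟩, hab⟩ := p
  have hne : τ a ≠ τ b := fun h => absurd (τ.injective h) (ne_of_lt hab)
  have hne2 : π (τ a) ≠ π (τ b) := fun h => absurd (π.injective h) hne
  by_cases h1 : τ a < τ b
  · have e1 : pmap τ ⟨(a, b), hab⟩ = ⟨(τ a, τ b), h1⟩ := dif_pos h1
    rw [e1]
    by_cases h2 : π (τ a) < π (τ b)
    · have e2 : pmap π ⟨(τ a, τ b), h1⟩ = ⟨(π (τ a), π (τ b)), h2⟩ := dif_pos h2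
      have e3 : pmap (π * τ) ⟨(a, b), hab⟩ = ⟨(π (τ a), π (τ b)), h2⟩ := dif_pos h2
      rw [e2, e3]
    · have h2' : π (τ b) < π (τ a) := lt_of_le_of_ne (not_lt.1 h2) hne2.symm
      have e2 : pmap π ⟨(τ a, τ b), h1⟩ = ⟨(π (τ b), π (τ a)), h2'⟩ := dif_neg h2
      have e3 : pmap (π * τ) ⟨(a, b), hab⟩ = ⟨(π (τ b), π (τ a)), h2'⟩ := dif_neg h2
      rw [e2, e3]
  · have h1' : τ b < τ a := lt_of_le_of_ne (not_lt.1 h1) hne.symm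
    have e1 : pmap τ ⟨(a, b), hab⟩ = ⟨(τ b, τ a), h1'⟩ := dif_neg h1
    rw [e1]
    by_cases h2 : π (τ b) < π (τ a)
    · have e2 : pmap π ⟨(τ b, τ a), h1'⟩ = ⟨(π (τ b), π (τ a)), h2⟩ := dif_pos h2
      have e3 : pmap (π * τ) ⟨(a, b), hab⟩ = ⟨(π (τ b), π (τ a)), h2⟩ :=
        dif_neg (by exact fun hc => absurd hc (asymm h2))
      rw [e2, e3]
    · have h2' : π (τ a) < π (τ b) := lt_of_le_of_ne (not_lt.1 h2) hne2
      have e2 : pmap π ⟨(τ b, τ a), h1'⟩ = ⟨(π (τ a), π (τ b)), h2'⟩ := dif_neg h2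
      have e3 : pmap (π * τ) ⟨(a, b), hab⟩ = ⟨(π (τ a), π (τ b)), h2'⟩ := dif_pos h2'
      rw [e2, e3]

lemma pmap_one (p : XP m) : pmap 1 p = p := by
  obtain ⟨⟨a, b⟩, hab⟩ := p
  simp [pmap, hab]

/-- `pmap` as an equivalence. -/
def pEquiv (π : Equiv.Perm (Fin (m+1))) : Equiv.Perm (XP m) where
  toFun := pmap π
  invFun := pmap π⁻¹
  left_inv p := by rw [← pmap_mul, inv_mul_cancel, pmap_one]
  right_inv p := by rw [← pmap_mul, mul_inv_cancel, pmap_one]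

lemma pEquiv_one : pEquiv (1 : Equiv.Perm (Fin (m+1))) = Equiv.refl (XP m) :=
  Equiv.ext fun p => pmap_one p

lemma pEquiv_mul (π τ : Equiv.Perm (Fin (m+1))) :
    pEquiv (π * τ) = (pEquiv τ).trans (pEquiv π) :=
  Equiv.ext fun p => pmap_mul π τ p

variable (m)

/-- The `ℤ`-module of formal sums of pairs. -/
abbrev VP := XP m →₀ ℤ

def rhoFun (π : Equiv.Perm (Fin (m+1))) : MulAut (Multiplicative (VP m)) :=
  AddEquiv.toMultiplicative (Finsupp.domCongr (pEquiv π))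

lemma rhoFun_one : rhoFun m (1 : Equiv.Perm (Fin (m+1))) = 1 := by
  rw [rhoFun, pEquiv_one, Finsupp.domCongr_refl]
  rfl

lemma rhoFun_mul (π τ : Equiv.Perm (Fin (m+1))) :
    rhoFun m (π * τ) = rhoFun m π * rhoFun m τ := by
  rw [rhoFun, pEquiv_mul, ← Finsupp.domCongr_trans]
  rfl

/-- The action of permutations on `Multiplicative VP`. -/
def rho : Equiv.Perm (Fin (m+1)) →* MulAut (Multiplicative (VP m)) where
  toFun := rhoFun m
  map_one' := rhoFun_one m
  map_mul' := rhoFun_mul m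

lemma rho_single (π : Equiv.Perm (Fin (m+1))) (p : XP m) (c : ℤ) :
    rho m π (Multiplicative.ofAdd (Finsupp.single p c))
      = Multiplicative.ofAdd (Finsupp.single (pmap π p) c) := by
  show Multiplicative.ofAdd (Finsupp.equivMapDomain _ (Finsupp.single p c)) = _
  rw [Finsupp.equivMapDomain_single]
  rfl

/-- The target group for the cocycle homomorphism. -/
abbrev GS := SemidirectProduct (Multiplicative (VP m)) (Equiv.Perm (Fin (m+1))) (rho m)

/-- The basis pair corresponding to generator `k`. -/
def prX (k : ℕ) (hk : k < m) : XP m :=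
  ⟨(⟨k, by omega⟩, ⟨k + 1, by omega⟩), by simp [Fin.lt_def]⟩

/-- The image of the `k`-th braid generator. -/
def fgen (k : Fin m) : GS m :=
  ⟨Multiplicative.ofAdd (Finsupp.single (prX m k k.isLt) 1), swg m k⟩

end CocyclePart

section PhiPart

variable {m : ℕ}

lemma swg_fix {k : Fin m} {x : Fin (m+1)} (h1 : (x:ℕ) ≠ (k:ℕ)) (h2 : (x:ℕ) ≠ (k:ℕ)+1) :
    swg m k x = x :=
  Equiv.swap_apply_of_ne_of_ne (Fin.ne_of_val_ne h1) (Fin.ne_of_val_ne h2)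

lemma swg_left (k : Fin m) (h1 : (k:ℕ) < m+1) (h2 : (k:ℕ)+1 < m+1) :
    swg m k ⟨k, h1⟩ = ⟨(k:ℕ)+1, h2⟩ :=
  Equiv.swap_apply_left _ _

lemma swg_right (k : Fin m) (h1 : (k:ℕ) < m+1) (h2 : (k:ℕ)+1 < m+1) :
    swg m k ⟨(k:ℕ)+1, h2⟩ = ⟨k, h1⟩ :=
  Equiv.swap_apply_right _ _

lemma pmap_eq {π : Equiv.Perm (Fin (m+1))} {a b c d : Fin (m+1)} (hab : a < b) (hcd : c < d)
    (h : (π a = c ∧ π b = d) ∨ (π a = d ∧ π b = c)) :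
    pmap π ⟨(a, b), hab⟩ = ⟨(c, d), hcd⟩ := by
  rcases h with ⟨h1, h2⟩ | ⟨h1, h2⟩
  · have e : pmap π ⟨(a, b), hab⟩ = ⟨(π a, π b), by rw [h1, h2]; exact hcd⟩ :=
      dif_pos (by rw [h1, h2]; exact hcd)
    rw [e]
    exact Subtype.ext (show (π a, π b) = (c, d) by rw [h1, h2])
  · have hba : π b < π a := by rw [h1, h2]; exact hcd
    have e : pmap π ⟨(a, b), hab⟩ = ⟨(π b, π a), hba⟩ := dif_neg (asymm hba)
    rw [e]
    exact Subtype.ext (show (π b, π a) = (c, d) by rw [h1, h2])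

lemma phiB_rels : ∀ r ∈ braidRels m, FreeGroup.lift (fgen m) r = 1 := by
  rintro r (⟨i, j, hij, rfl⟩ | ⟨i, j, hij, rfl⟩) <;>
    simp only [map_mul, map_inv, FreeGroup.lift_apply_of]
  · -- commuting relation
    rw [mul_inv_eq_one, mul_inv_eq_iff_eq_mul]
    have hcs : Commute (swg m i) (swg m j) := by
      apply swap_commute <;> (apply Fin.ne_of_val_ne; simp only [Fin.val_mk]; omega)
    have hpj : pmap (swg m i) (prX m j j.isLt) = prX m j j.isLt := by
      refine pmap_eq _ _ (Or.inl ⟨?_, ?_⟩) <;>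
        · apply swg_fix <;> (simp only [Fin.val_mk]; omega)
    have hpi : pmap (swg m j) (prX m i i.isLt) = prX m i i.isLt := by
      refine pmap_eq _ _ (Or.inl ⟨?_, ?_⟩) <;>
        · apply swg_fix <;> (simp only [Fin.val_mk]; omega)
    apply SemidirectProduct.ext
    · simp only [SemidirectProduct.mul_left, SemidirectProduct.mul_right]
      show Multiplicative.ofAdd _ * rho m (swg m i) (Multiplicative.ofAdd _)
        = Multiplicative.ofAdd _ * rho m (swg m j) (Multiplicative.ofAdd _)
      rw [rho_single, rho_single, hpi, hpj, ← ofAdd_add, ← ofAdd_add, add_comm]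
    · simp only [SemidirectProduct.mul_right]
      exact hcs.eq
  · -- braid relation
    rw [mul_inv_eq_one]
    obtain ⟨iv, hiv⟩ := i
    obtain ⟨jv, hjv⟩ := j
    simp only [Fin.val_mk] at hij
    subst hij
    have h2v : iv + 2 < m + 1 := by omega
    set pI : XP m := prX m iv (by omega) with hpIdef
    set pJ : XP m := prX m (iv+1) (by omega) with hpJdef
    set pD : XP m := ⟨(⟨iv, by omega⟩, ⟨iv+2, by omega⟩), by simp [Fin.lt_def]⟩ with hpDdef
    have hfI : fgen m ⟨iv, hiv⟩
        = ⟨Multiplicative.ofAdd (Finsupp.single pI 1), swg m ⟨iv, hiv⟩⟩ := rfl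
    have hfJ : fgen m ⟨iv+1, hjv⟩
        = ⟨Multiplicative.ofAdd (Finsupp.single pJ 1), swg m ⟨iv+1, hjv⟩⟩ := rfl
    set sI := swg m ⟨iv, hiv⟩ with hsI
    set sJ := swg m ⟨iv+1, hjv⟩ with hsJ
    have evI0 : sI ⟨iv, by omega⟩ = ⟨iv+1, by omega⟩ := swg_left _ _ _
    have evI1 : sI ⟨iv+1, by omega⟩ = ⟨iv, by omega⟩ := swg_right _ _ _
    have evI2 : sI ⟨iv+2, by omega⟩ = ⟨iv+2, by omega⟩ := swg_fix (by simp) (by simp)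
    have evJ0 : sJ ⟨iv, by omega⟩ = ⟨iv, by omega⟩ := swg_fix (by simp) (by simp; omega)
    have evJ1 : sJ ⟨iv+1, by omega⟩ = ⟨iv+2, by omega⟩ := swg_left _ _ _
    have evJ2 : sJ ⟨iv+2, by omega⟩ = ⟨iv+1, by omega⟩ := swg_right _ _ _
    have F1 : pmap sI pJ = pD := pmap_eq _ _ (Or.inl ⟨evI1, evI2⟩)
    have F2 : pmap (sI * sJ) pI = pJ := by
      refine pmap_eq _ _ (Or.inl ⟨?_, ?_⟩)
      · show sI (sJ _) = _
        rw [evJ0, evI0]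
      · show sI (sJ _) = _
        rw [evJ1, evI2]
    have F3 : pmap sJ pI = pD := pmap_eq _ _ (Or.inl ⟨evJ0, evJ1⟩)
    have F4 : pmap (sJ * sI) pJ = pI := by
      refine pmap_eq _ _ (Or.inl ⟨?_, ?_⟩)
      · show sJ (sI _) = _
        rw [evI1, evJ0]
      · show sJ (sI _) = _
        rw [evI2, evJ2]
    have hbr : sI * sJ * sI = sJ * sI * sJ := by
      rw [hsI, hsJ, swg, swg]
      exact swap_braid (by apply Fin.ne_of_val_ne; simp only [Fin.val_mk]; omega)
        (by apply Fin.ne_of_val_ne; simp only [Fin.val_mk]; omega)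
        (by apply Fin.ne_of_val_ne; simp only [Fin.val_mk]; omega)
    rw [hfI, hfJ]
    apply SemidirectProduct.ext
    · simp only [SemidirectProduct.mul_left, SemidirectProduct.mul_right]
      show Multiplicative.ofAdd _ * rho m sI (Multiplicative.ofAdd _)
          * rho m (sI * sJ) (Multiplicative.ofAdd _)
        = Multiplicative.ofAdd _ * rho m sJ (Multiplicative.ofAdd _)
          * rho m (sJ * sI) (Multiplicative.ofAdd _)
      rw [rho_single, rho_single, rho_single, rho_single, F1, F2, F3, F4,
        ← ofAdd_add, ← ofAdd_add, ← ofAdd_add, ← ofAdd_add]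
      apply congrArg
      abel
    · simp only [SemidirectProduct.mul_right]
      exact hbr

end PhiPart

section PsiPart

variable (m : ℕ)

def phiB : Braid m →* GS m := PresentedGroup.toGroup phiB_rels

lemma phiB_right (g : Braid m) : (phiB m g).right = permB m g := by
  have h : (SemidirectProduct.rightHom.comp (phiB m)) = permB m := by
    apply PresentedGroup.ext
    intro x
    show SemidirectProduct.rightHom (phiB m (PresentedGroup.of x)) = permB m (PresentedGroup.of x)
    rw [show (PresentedGroup.of x : Braid m) = sigma x from rfl]
    rw [show phiB m (sigma x) = fgen m x from PresentedGroup.toGroup.of phiB_rels,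
      permB_sigma]
    rfl
  exact DFunLike.congr_fun h g

lemma conj_one_GS (x : GS m) (v : Multiplicative (VP m)) :
    x * ⟨v, 1⟩ * x⁻¹ = ⟨rho m x.right v, 1⟩ := by
  apply SemidirectProduct.ext
  · simp only [SemidirectProduct.mul_left, SemidirectProduct.mul_right,
      SemidirectProduct.inv_left, SemidirectProduct.inv_right, mul_one, map_one]
    have e1 : ((rho m) x.right) (((rho m) x.right⁻¹) x.left⁻¹) = x.left⁻¹ := by
      rw [map_inv (rho m) x.right, MulAut.apply_inv_self]
    rw [e1, mul_comm x.left (((rho m) x.right) v)]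
    group
  · simp only [SemidirectProduct.mul_right, SemidirectProduct.inv_right]
    group

/-- The pair associated to `(i,j)`. -/
def pOf {i j : ℕ} (hij : i < j) (hjm : j ≤ m) : XP m :=
  ⟨(⟨i, by omega⟩, ⟨j, by omega⟩), by simp only [Fin.lt_def]; exact hij⟩

lemma phiB_sg {k : ℕ} (hk : k < m) :
    phiB m (sg m k) = ⟨Multiplicative.ofAdd (Finsupp.single (prX m k hk) 1),
      Equiv.swap ⟨k, by omega⟩ ⟨k + 1, by omega⟩⟩ := by
  rw [sg, dif_pos hk]
  rw [show phiB m (sigma ⟨k, hk⟩) = fgen m ⟨k, hk⟩ from PresentedGroup.toGroup.of phiB_rels]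
  rfl

lemma phiB_Ael {i j : ℕ} (hij : i < j) (hjm : j ≤ m) :
    phiB m (Ael m i j) = ⟨Multiplicative.ofAdd (Finsupp.single (pOf m hij hjm) 2), 1⟩ := by
  induction j with
  | zero => omega
  | succ j ih =>
    by_cases hji : j = i
    · -- base case
      subst hji
      have hjmm : j < m := by omega
      rw [Ael_succ, if_pos rfl, map_mul, phiB_sg m hjmm]
      apply SemidirectProduct.ext
      · simp only [SemidirectProduct.mul_left, SemidirectProduct.mul_right]
        show Multiplicative.ofAdd _ * rho m _ (Multiplicative.ofAdd _) = Multiplicative.ofAdd _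
        rw [show (Equiv.swap (⟨j, by omega⟩ : Fin (m+1)) ⟨j + 1, by omega⟩) = swg m ⟨j, hjmm⟩
          from rfl]
        rw [rho_single]
        have hpm : pmap (swg m ⟨j, hjmm⟩) (prX m j hjmm) = prX m j hjmm := by
          refine pmap_eq _ _ (Or.inr ⟨?_, ?_⟩)
          · exact swg_left _ _ _
          · exact swg_right _ _ _
        rw [hpm, ← ofAdd_add]
        have : prX m j hjmm = pOf m hij hjm := rfl
        rw [this, ← Finsupp.single_add]
        norm_num
      · simp only [SemidirectProduct.mul_right]
        exact Equiv.swap_mul_self _ _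
    · -- inductive step
      have hij' : i < j := by omega
      have hjm' : j ≤ m := by omega
      have hjmm : j < m := by omega
      rw [Ael_succ, if_neg hji, map_mul, map_mul, map_inv, ih hij' hjm', phiB_sg m hjmm]
      rw [conj_one_GS]
      have hpm : pmap (Equiv.swap (⟨j, by omega⟩ : Fin (m+1)) ⟨j+1, by omega⟩)
          (pOf m hij' hjm') = pOf m hij hjm := by
        refine pmap_eq _ _ (Or.inl ⟨?_, ?_⟩)
        · show swg m ⟨j, hjmm⟩ _ = _
          exact swg_fix (by simp only [Fin.val_mk]; omega) (by simp only [Fin.val_mk]; omega)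
        · show swg m ⟨j, hjmm⟩ _ = _
          exact swg_left _ _ _
      apply SemidirectProduct.ext
      · show rho m _ (Multiplicative.ofAdd _) = Multiplicative.ofAdd _
        rw [rho_single, hpm]
      · rfl

/-- The abelianized linking-number homomorphism on the pure braid group. -/
def psiK : ((permB m).ker) →* Multiplicative (VP m) where
  toFun g := (phiB m g.1).left
  map_one' := by
    show (phiB m 1).left = 1
    rw [map_one]
    rfl
  map_mul' g h := by
    show (phiB m (g.1 * h.1)).left = _
    rw [map_mul, SemidirectProduct.mul_left, phiB_right,
      show permB m g.1 = 1 from g.2, map_one]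
    rfl

lemma psiK_Ael {i j : ℕ} (hij : i < j) (hjm : j ≤ m) (hmem : Ael m i j ∈ (permB m).ker) :
    psiK m ⟨Ael m i j, hmem⟩ = Multiplicative.ofAdd (Finsupp.single (pOf m hij hjm) 2) := by
  show (phiB m (Ael m i j)).left = _
  rw [phiB_Ael m hij hjm]

end PsiPart

section Assembly

variable (m : ℕ)

lemma Ael_mem_ker {i j : ℕ} : Ael m i j ∈ (permB m).ker :=
  MonoidHom.mem_ker.2 (permB_Ael m i j)

lemma pOf_eta (p : XP m) (hij : (p.1.1 : ℕ) < (p.1.2 : ℕ)) (hjm : (p.1.2 : ℕ) ≤ m) :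
    pOf m hij hjm = p := by
  apply Subtype.ext
  apply Prod.ext
  · exact Fin.eta _ _
  · exact Fin.eta _ _

lemma XP_lt (p : XP m) : (p.1.1 : ℕ) < (p.1.2 : ℕ) := p.2

lemma XP_le (p : XP m) : (p.1.2 : ℕ) ≤ m := by omega

/-- The basis map to the abelianization of the pure braid group. -/
def basMap (p : XP m) : Additive (Abelianization ((permB m).ker)) :=
  Additive.ofMul (Abelianization.of
    (⟨Ael m (p.1.1 : ℕ) (p.1.2 : ℕ), Ael_mem_ker m⟩ : ((permB m).ker)))

/-- The homomorphism from the free abelian group on pairs. -/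
def Lhom : FreeAbelianGroup (XP m) →+ Additive (Abelianization ((permB m).ker)) :=
  FreeAbelianGroup.lift (basMap m)

/-- The abelianized linking number homomorphism. -/
def PsiAb : Additive (Abelianization ((permB m).ker)) →+ VP m :=
  MonoidHom.toAdditiveLeft (Abelianization.lift (psiK m))

lemma PsiAb_comp_Lhom :
    (PsiAb m).comp (Lhom m)
      = (DistribMulAction.toAddMonoidHom (VP m) (2:ℤ)).comp FreeAbelianGroup.toFinsupp := by
  refine FreeAbelianGroup.lift_ext _ _ ?_
  intro p
  show PsiAb m (Lhom m (FreeAbelianGroup.of p)) = (2:ℤ) • FreeAbelianGroup.toFinsupp (FreeAbelianGroup.of p)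
  rw [Lhom, FreeAbelianGroup.lift_apply_of, FreeAbelianGroup.toFinsupp_of]
  show Multiplicative.toAdd ((Abelianization.lift (psiK m)) (Abelianization.of
    (⟨Ael m (p.1.1 : ℕ) (p.1.2 : ℕ), Ael_mem_ker m⟩ : ((permB m).ker)))) = _
  rw [Abelianization.lift_apply_of, psiK_Ael m (XP_lt m p) (XP_le m p), pOf_eta]
  rw [Finsupp.smul_single]
  norm_num

lemma Lhom_inj : Function.Injective (Lhom m) := by
  intro x y h
  have h2 : ((PsiAb m).comp (Lhom m)) x = ((PsiAb m).comp (Lhom m)) y := by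
    simp only [AddMonoidHom.comp_apply, h]
  rw [PsiAb_comp_Lhom] at h2
  simp only [AddMonoidHom.comp_apply, DistribMulAction.toAddMonoidHom_apply] at h2
  have h3 : FreeAbelianGroup.toFinsupp x = FreeAbelianGroup.toFinsupp y :=
    smul_right_injective (VP m) (by norm_num : (2:ℤ) ≠ 0) h2
  have h4 := congrArg Finsupp.toFreeAbelianGroup h3
  rwa [Finsupp.toFreeAbelianGroup_toFinsupp, Finsupp.toFreeAbelianGroup_toFinsupp] at h4

lemma Lhom_surj : Function.Surjective (Lhom m) := by
  intro z
  have hz : Additive.ofMul (Additive.toMul z) = z := rfl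
  rw [← hz]
  refine QuotientGroup.induction_on (Additive.toMul z) ?_
  intro g
  obtain ⟨a, ha⟩ := g
  have haNA : a ∈ NA m := by rw [← ker_permB_eq]; exact ha
  revert ha
  refine Subgroup.closure_induction
    (p := fun a _ => ∀ (h : a ∈ (permB m).ker),
      ∃ x, Lhom m x = Additive.ofMul (QuotientGroup.mk (⟨a, h⟩ : ((permB m).ker))))
    ?_ ?_ ?_ ?_ haNA
  · rintro x ⟨i, j, hij, hjm, rfl⟩ h
    refine ⟨FreeAbelianGroup.of (pOf m hij hjm), ?_⟩
    rw [Lhom, FreeAbelianGroup.lift_apply_of]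
    rfl
  · intro h
    refine ⟨0, ?_⟩
    rw [map_zero]
    have : (⟨1, h⟩ : ((permB m).ker)) = 1 := rfl
    rw [this]
    rfl
  · intro x y hx hy ihx ihy h
    obtain ⟨u, hu⟩ := ihx (ker_permB_eq m ▸ hx)
    obtain ⟨v, hv⟩ := ihy (ker_permB_eq m ▸ hy)
    refine ⟨u + v, ?_⟩
    rw [map_add, hu, hv]
    rfl
  · intro x hx ihx h
    obtain ⟨u, hu⟩ := ihx (ker_permB_eq m ▸ hx)
    refine ⟨-u, ?_⟩
    rw [map_neg, hu]
    rfl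

/-- The main isomorphism. -/
def eAb : FreeAbelianGroup (XP m) ≃+ Additive (Abelianization ((permB m).ker)) :=
  AddEquiv.ofBijective (Lhom m) ⟨Lhom_inj m, Lhom_surj m⟩

lemma eAb_of (p : XP m) : eAb m (FreeAbelianGroup.of p) = basMap m p := by
  show Lhom m (FreeAbelianGroup.of p) = basMap m p
  rw [Lhom, FreeAbelianGroup.lift_apply_of]

end Assembly

end BraidPf

theorem stmt18 (n : ℕ) (hn : 2 ≤ n)
    (perm : Braid (n-1) →* Equiv.Perm (Fin n))
    (hperm : ∀ (i : Fin (n-1)) (h1 : (i : ℕ) < n) (h2 : (i : ℕ) + 1 < n),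
      perm (sigma i) = Equiv.swap ⟨i, h1⟩ ⟨(i : ℕ) + 1, h2⟩) :
    ∃ hmem : ∀ i j : Fin n, i < j → Ael (n-1) i j ∈ perm.ker,
      ∃ e : FreeAbelianGroup {p : Fin n × Fin n // p.1 < p.2} ≃+
          Additive (Abelianization ↥perm.ker),
        ∀ p : {p : Fin n × Fin n // p.1 < p.2},
          e (FreeAbelianGroup.of p) =
            Additive.ofMul (Abelianization.of
              (⟨Ael (n-1) p.1.1 p.1.2, hmem p.1.1 p.1.2 p.2⟩ : ↥perm.ker)) := by
  obtain ⟨m, rfl⟩ : ∃ m, n = m + 2 := ⟨n - 2, by omega⟩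
  have hperm_eq : perm = BraidPf.permB (m+1) := by
    apply PresentedGroup.ext
    intro x
    have h1 : (x : ℕ) < m + 2 := by omega
    have h2 : (x : ℕ) + 1 < m + 2 := by omega
    have := hperm x h1 h2
    rw [show (PresentedGroup.of x : Braid (m+2-1)) = sigma x from rfl, this]
    exact (BraidPf.permB_sigma (m+1) x).symm
  subst hperm_eq
  refine ⟨fun i j _ => BraidPf.Ael_mem_ker (m+1), ⟨BraidPf.eAb (m+1), ?_⟩⟩
  intro p
  exact BraidPf.eAb_of (m+1) p
end
end
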